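/- arXiv:1311.2330 — 3 statements merged into one kernel-verified Lean document; each statement's English description precedes it below -/
import Mathlib

section
/- Let κ > ω be a limit cardinal and let {X_i : i ∈ I} be a set of topological spaces with |I| ≥ κ and S(X_i) ≥ 3 for each i ∈ I. Let α := sup{S((X_I)_γ) : ω ≤ γ < κ} (supremum over infinite cardinals γ < κ). Then: (a) κ ≤ α ≤ S((X_I)_κ) ≤ α⁺, and κ⁺ ≤ S((X_I)_κ); (b) if α is regular and κ < α then S((X_I)_κ) = α; and (c) if α is singular or κ = α then S((X_I)_κ) = α⁺. -/
open Cardinal TopologicalSpace Set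
open Topology

universe u

/-- The `κ`-box topology on a product of topological spaces: generated by the boxes
`Π i, U i` with each `U i` open and fewer than `κ` coordinates restricted. -/
def boxTopology (κ : Cardinal.{u}) {ι : Type u} (X : ι → Type u)
    [∀ i, TopologicalSpace (X i)] : TopologicalSpace (∀ i, X i) :=
  TopologicalSpace.generateFrom
    {S | ∃ U : ∀ i, Set (X i), (∀ i, IsOpen (U i)) ∧
      #{i | U i ≠ Set.univ} < κ ∧ S = Set.pi Set.univ U}

/-- A cellular family: a family of pairwise disjoint nonempty open sets. -/
def IsCellular {X : Type u} [TopologicalSpace X] (C : Set (Set X)) : Prop :=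
  (∀ U ∈ C, IsOpen U ∧ U.Nonempty) ∧ C.Pairwise fun U V => Disjoint U V

/-- The Souslin number: the least cardinal `c` such that no cellular family has
cardinality `c` (finite values allowed). -/
noncomputable def souslin (X : Type u) [TopologicalSpace X] : Cardinal.{u} :=
  sInf {c | ¬∃ C : Set (Set X), IsCellular C ∧ #C = c}

namespace ET14
variable {X : Type u}

/-- achieved cardinalities of cellular families of subsets of `W`. -/
def AchIn (t : TopologicalSpace X) (W : Set X) (c : Cardinal.{u}) : Prop :=
  ∃ C : Set (Set X), @IsCellular X t C ∧ (∀ u ∈ C, u ⊆ W) ∧ #C = c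

lemma cellular_subset {t : TopologicalSpace X} {C C' : Set (Set X)} (h : @IsCellular X t C)
    (hsub : C' ⊆ C) : @IsCellular X t C' :=
  ⟨fun u hu => h.1 u (hsub hu), h.2.mono hsub⟩

lemma achIn_mono {t : TopologicalSpace X} {W : Set X} {c c' : Cardinal.{u}}
    (h : AchIn t W c) (hle : c' ≤ c) : AchIn t W c' := by
  obtain ⟨C, hC, hW, rfl⟩ := h
  obtain ⟨C', hsub, hcard⟩ := Cardinal.le_mk_iff_exists_subset.mp hle
  exact ⟨C', cellular_subset hC hsub, fun u hu => hW u (hsub hu), hcard⟩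

lemma not_achIn_top (t : TopologicalSpace X) (W : Set X) :
    ¬ AchIn t W (Order.succ #(Set X)) := by
  rintro ⟨C, -, -, hcard⟩
  exact absurd hcard (ne_of_lt (lt_of_le_of_lt (Cardinal.mk_set_le C) (Order.lt_succ _)))

/-- Souslin-type number localized at an open set `W`. -/
noncomputable def sn (t : TopologicalSpace X) (W : Set X) : Cardinal.{u} :=
  sInf {c | ¬ AchIn t W c}

lemma lt_sn_iff {t : TopologicalSpace X} {W : Set X} {c : Cardinal.{u}} :
    c < sn t W ↔ AchIn t W c := by
  constructor
  · intro h
    by_contra hc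
    exact absurd (csInf_le' (show c ∈ {c | ¬ AchIn t W c} from hc)) (not_le.mpr h)
  · intro h
    have hne : {c | ¬ AchIn t W c}.Nonempty := ⟨_, not_achIn_top t W⟩
    have hmem := csInf_mem hne
    by_contra hc
    exact hmem (achIn_mono h (not_lt.mp hc))

lemma sn_le_of_not {t : TopologicalSpace X} {W : Set X} {c : Cardinal.{u}}
    (h : ¬ AchIn t W c) : sn t W ≤ c := csInf_le' h

lemma souslin_eq_sn (t : TopologicalSpace X) : @souslin X t = sn t univ := by
  unfold souslin sn
  congr 1
  ext c
  simp only [mem_setOf_eq, AchIn]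
  constructor
  · intro h ⟨C, hC, _, hc⟩; exact h ⟨C, hC, hc⟩
  · intro h ⟨C, hC, hc⟩; exact h ⟨C, hC, fun u _ => subset_univ u, hc⟩

lemma achIn_mono_set {t : TopologicalSpace X} {W W' : Set X} {c : Cardinal.{u}}
    (hW : W ⊆ W') (h : AchIn t W c) : AchIn t W' c := by
  obtain ⟨C, hC, hsub, rfl⟩ := h
  exact ⟨C, hC, fun u hu => (hsub u hu).trans hW, rfl⟩

lemma achIn_mono_topology {t t' : TopologicalSpace X} {W : Set X} {c : Cardinal.{u}}
    (hle : t' ≤ t) (h : AchIn t W c) : AchIn t' W c := by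
  obtain ⟨C, hC, hsub, rfl⟩ := h
  exact ⟨C, ⟨fun u hu => ⟨(hC.1 u hu).1.mono hle, (hC.1 u hu).2⟩, hC.2⟩, hsub, rfl⟩

lemma souslin_mono {t t' : TopologicalSpace X} (hle : t' ≤ t) :
    @souslin X t ≤ @souslin X t' := by
  rw [souslin_eq_sn, souslin_eq_sn]
  by_contra hlt
  have h := lt_sn_iff.mp (not_le.mp hlt)
  exact absurd (lt_sn_iff.mpr (achIn_mono_topology hle h)) (lt_irrefl _)

/-- the counting lemma: cardinality bounded by fibers. -/
lemma mk_le_mul_iSup {A T : Type u} (F : A → T) :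
    Cardinal.mk A ≤ #T * ⨆ t, #{a // F a = t} := by
  have h1 : #A = Cardinal.sum (fun t => #{a // F a = t}) := by
    rw [← Cardinal.mk_sigma]
    exact Cardinal.mk_congr (Equiv.sigmaFiberEquiv F).symm
  rw [h1, ← Cardinal.sum_const']
  refine Cardinal.sum_le_sum _ _ fun t => le_ciSup (f := fun t => #{a // F a = t}) ?_ t
  exact ⟨#A, by rintro x ⟨t, rfl⟩; exact Cardinal.mk_le_of_injective (f := (Subtype.val : {a // F a = t} → A)) Subtype.val_injective⟩

section boxes
variable {ι : Type u} (X : ι → Type u) [∀ i, TopologicalSpace (X i)]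

def IsBox (κ : Cardinal.{u}) (S : Set (∀ i, X i)) : Prop :=
  ∃ U : ∀ i, Set (X i), (∀ i, IsOpen (U i)) ∧ #{i | U i ≠ Set.univ} < κ ∧ S = Set.pi Set.univ U

lemma isOpen_of_isBox {κ : Cardinal.{u}} {S : Set (∀ i, X i)} (h : IsBox X κ S) :
    IsOpen[boxTopology κ X] S :=
  TopologicalSpace.GenerateOpen.basic S (by exact h)

lemma boxTopology_mono {γ γ' : Cardinal.{u}} (h : γ ≤ γ') :
    boxTopology γ' X ≤ boxTopology γ X :=
  TopologicalSpace.generateFrom_anti (by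
    rintro S ⟨U, hU, hcard, rfl⟩
    exact ⟨U, hU, lt_of_lt_of_le hcard h, rfl⟩)

lemma isBox_inter {κ : Cardinal.{u}} (hκ : ℵ₀ ≤ κ) {S T : Set (∀ i, X i)}
    (hS : IsBox X κ S) (hT : IsBox X κ T) : IsBox X κ (S ∩ T) := by
  obtain ⟨U, hU, hUc, rfl⟩ := hS
  obtain ⟨V, hV, hVc, rfl⟩ := hT
  refine ⟨fun i => U i ∩ V i, fun i => (hU i).inter (hV i), ?_, (Set.pi_inter_distrib).symm⟩
  refine lt_of_le_of_lt (le_trans (Cardinal.mk_le_mk_of_subset ?_) (Cardinal.mk_union_le _ _))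
    (Cardinal.add_lt_of_lt hκ hUc hVc)
  intro i hi
  by_contra hcon
  simp only [mem_union, mem_setOf_eq, not_or, not_not] at hcon
  exact hi (by simp [mem_setOf_eq, hcon.1, hcon.2] at *)

lemma isBox_univ {κ : Cardinal.{u}} (hκ : 0 < κ) : IsBox X κ (univ : Set (∀ i, X i)) := by
  refine ⟨fun _ => univ, fun _ => isOpen_univ, ?_, by simp⟩
  simpa using hκ

lemma exists_box_subset {κ : Cardinal.{u}} (hκ : ℵ₀ ≤ κ) {O : Set (∀ i, X i)}
    (hO : IsOpen[boxTopology κ X] O) : ∀ x ∈ O, ∃ B, IsBox X κ B ∧ x ∈ B ∧ B ⊆ O := by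
  induction hO with
  | basic S hS => exact fun x hx => ⟨S, hS, hx, subset_rfl⟩
  | univ => exact fun x _ => ⟨univ, isBox_univ X (lt_of_lt_of_le aleph0_pos hκ), trivial, subset_rfl⟩
  | inter S T hS hT ihS ihT =>
    rintro x ⟨hxS, hxT⟩
    obtain ⟨B1, hB1, hx1, hs1⟩ := ihS x hxS
    obtain ⟨B2, hB2, hx2, hs2⟩ := ihT x hxT
    exact ⟨B1 ∩ B2, isBox_inter X hκ hB1 hB2, ⟨hx1, hx2⟩, inter_subset_inter hs1 hs2⟩
  | sUnion 𝒮 h ih =>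
    rintro x ⟨S, hS, hxS⟩
    obtain ⟨B, hB, hx, hs⟩ := ih S hS x hxS
    exact ⟨B, hB, hx, hs.trans (subset_sUnion_of_mem hS)⟩


open scoped Classical in
/-- The Δ-construction: `μ` pairwise disjoint boxes in the `γ`-box product, provided
`μ ≤ #ι` and every `δ < μ` has `δ + 1 < γ`. -/
lemma delta_construction (μ γ : Cardinal.{u}) (hμι : μ ≤ #ι)
    (hγ : ∀ δ < μ, δ + 1 < γ)
    (U0 U1 : ∀ i, Set (X i)) (h0 : ∀ i, IsOpen (U0 i)) (h1 : ∀ i, IsOpen (U1 i))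
    (hne0 : ∀ i, (U0 i).Nonempty) (hne1 : ∀ i, (U1 i).Nonempty)
    (hd : ∀ i, Disjoint (U0 i) (U1 i)) :
    AchIn (boxTopology γ X) univ μ := by
  set T := μ.ord.ToType with hT
  have hmkT : #T = μ := by rw [hT, Cardinal.mk_toType, Cardinal.card_ord]
  obtain ⟨f⟩ : Nonempty (T ↪ ι) := Cardinal.le_def _ _ |>.mp (hmkT ▸ hμι)
  set V : T → ∀ i, Set (X i) := fun t i =>
    if i = f t then U0 i else if ∃ s, s < t ∧ f s = i then U1 i else univ with hV
  set B : T → Set (∀ i, X i) := fun t => Set.pi univ (V t) with hB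
  have hVopen : ∀ t i, IsOpen (V t i) := by
    intro t i
    rw [hV]
    dsimp only
    split
    · exact h0 i
    · split
      · exact h1 i
      · exact isOpen_univ
  have hVne : ∀ t i, (V t i).Nonempty := by
    intro t i
    rw [hV]; dsimp only
    split
    · exact hne0 i
    · split
      · exact hne1 i
      · exact ⟨(hne0 i).some, trivial⟩
  have hBox : ∀ t, IsBox X γ (B t) := by
    intro t
    refine ⟨V t, hVopen t, ?_, rfl⟩
    have hsub : {i | V t i ≠ Set.univ} ⊆ f '' (Set.Iic t) := by
      intro i hi
      rw [hV] at hi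
      dsimp only at hi
      by_cases h1' : i = f t
      · exact ⟨t, Set.self_mem_Iic, h1'.symm⟩
      · by_cases h2' : ∃ s, s < t ∧ f s = i
        · obtain ⟨s, hs, rfl⟩ := h2'
          exact ⟨s, le_of_lt hs, rfl⟩
        · simp only [Set.mem_setOf_eq, if_neg h1', if_neg h2'] at hi
          exact absurd rfl hi
    have hIio : #(Set.Iio t) < μ := Cardinal.mk_Iio_ord_toType t
    calc #{i | V t i ≠ Set.univ} ≤ #(f '' (Set.Iic t)) := Cardinal.mk_le_mk_of_subset hsub
      _ ≤ #(Set.Iic t) := Cardinal.mk_image_le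
      _ ≤ #(Set.Iio t) + 1 := by rw [← Set.Iio_insert]; exact Cardinal.mk_insert_le
      _ < γ := hγ _ hIio
  have hBne : ∀ t, (B t).Nonempty := fun t => Set.univ_pi_nonempty_iff.mpr (hVne t)
  have hdisj : ∀ t t' : T, t < t' → Disjoint (B t) (B t') := by
    intro t t' htt
    rw [Set.disjoint_left]
    intro x hx hx'
    have hxt : x (f t) ∈ V t (f t) := hx (f t) trivial
    have hxt' : x (f t) ∈ V t' (f t) := hx' (f t) trivial
    rw [hV] at hxt hxt'
    dsimp only at hxt hxt'
    rw [if_pos rfl] at hxt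
    rw [if_neg (fun h => (ne_of_lt htt) (f.injective h)), if_pos ⟨t, htt, rfl⟩] at hxt'
    exact Set.disjoint_left.mp (hd (f t)) hxt hxt'
  have hinj : Function.Injective B := by
    intro t t' h
    by_contra hne
    rcases lt_or_gt_of_ne hne with hlt | hlt
    · have hc := hdisj t t' hlt
      rw [h] at hc
      exact (hBne t').ne_empty (by simpa using disjoint_self.mp hc)
    · have hc := hdisj t' t hlt
      rw [h] at hc
      exact (hBne t').ne_empty (by simpa using disjoint_self.mp hc)
  refine ⟨Set.range B, ⟨?_, ?_⟩, fun u _ => Set.subset_univ u, by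
    rw [Cardinal.mk_range_eq B hinj, hmkT]⟩
  · rintro u ⟨t, rfl⟩
    exact ⟨isOpen_of_isBox X (hBox t), hBne t⟩
  · rintro u ⟨t, rfl⟩ v ⟨t', rfl⟩ hne
    rcases lt_or_gt_of_ne (fun h : t = t' => hne (congrArg B h)) with h | h
    · exact hdisj _ _ h
    · exact (hdisj _ _ h).symm


lemma two_disjoint_opens {Y : Type u} [tY : TopologicalSpace Y] (h : 3 ≤ souslin Y) :
    ∃ U V : Set Y, IsOpen U ∧ IsOpen V ∧ U.Nonempty ∧ V.Nonempty ∧ Disjoint U V := by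
  have h2 : (2 : Cardinal.{u}) < souslin Y := lt_of_lt_of_le (by norm_num) h
  rw [souslin_eq_sn] at h2
  obtain ⟨C, hC, -, hcard⟩ := lt_sn_iff.mp h2
  obtain ⟨u, v, huv⟩ := Cardinal.two_le_iff.mp (le_of_eq hcard.symm)
  refine ⟨u.1, v.1, (hC.1 u.1 u.2).1, (hC.1 v.1 v.2).1, (hC.1 u.1 u.2).2, (hC.1 v.1 v.2).2, ?_⟩
  exact hC.2 u.2 v.2 (fun h => huv (Subtype.ext h))

lemma ach_box (μ γ : Cardinal.{u}) (hμι : μ ≤ #ι) (hγ : ∀ δ < μ, δ + 1 < γ)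
    (hS : ∀ i, 3 ≤ souslin (X i)) : AchIn (boxTopology γ X) univ μ := by
  have h := fun i => two_disjoint_opens (hS i)
  choose U0 U1 h0 h1 hne0 hne1 hd using h
  exact delta_construction X μ γ hμι hγ U0 U1 h0 h1 hne0 hne1 hd

lemma ub {κ μ : Cardinal.{u}} (hκ : ℵ₀ < κ) (hsucc : ∀ δ < κ, Order.succ δ < κ)
    (hreg : μ.IsRegular) (hκμ : κ < μ)
    (hach : ∀ γ, ℵ₀ ≤ γ → γ < κ → ¬ AchIn (boxTopology γ X) univ μ) :
    ¬ AchIn (boxTopology κ X) univ μ := by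
  rintro ⟨C, hC, -, hcard⟩
  have hbex : ∀ c : ↥C, ∃ B, IsBox X κ B ∧ B.Nonempty ∧ B ⊆ c.1 := by
    intro c
    obtain ⟨x, hx⟩ := (hC.1 c.1 c.2).2
    obtain ⟨B, hB, hxB, hBsub⟩ := exists_box_subset X hκ.le (hC.1 c.1 c.2).1 x hx
    exact ⟨B, hB, ⟨x, hxB⟩, hBsub⟩
  choose b hbox hbne hbsub using hbex
  choose Uc hUo hUc hUeq using hbox
  set σ : ↥C → Cardinal.{u} := fun c => #{i | Uc c i ≠ Set.univ} with hσ
  set γf : ↥C → Cardinal.{u} := fun c => Order.succ (σ c ⊔ ℵ₀) with hγf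
  have hγf0 : ∀ c, ℵ₀ ≤ γf c := fun c => le_trans (le_sup_right) (Order.le_succ _)
  have hγfκ : ∀ c, γf c < κ := fun c => hsucc _ (sup_lt_iff.mpr ⟨hUc c, hκ⟩)
  have hσγf : ∀ c, σ c < γf c := fun c => lt_of_le_of_lt le_sup_left (Order.lt_succ _)
  set F : ↥C → κ.ord.ToType := fun c =>
    Ordinal.ToType.mk ⟨(γf c).ord, Cardinal.ord_lt_ord.mpr (hγfκ c)⟩ with hF
  have hfib : ∀ t, #{c : ↥C // F c = t} < μ := by
    intro t
    by_contra hge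
    push_neg at hge
    have hfne : Nonempty {c : ↥C // F c = t} := by
      rw [← Cardinal.mk_ne_zero_iff]
      intro h0'
      rw [h0'] at hge
      exact absurd (le_trans hreg.1 hge) (by simp [Cardinal.aleph0_ne_zero])
    obtain ⟨c0⟩ := hfne
    have hsame : ∀ c : {c : ↥C // F c = t}, γf c.1 = γf c0.1 := by
      intro c
      have : F c.1 = F c0.1 := c.2.trans c0.2.symm
      have h2 := Ordinal.ToType.mk.injective this
      have h3 : (γf c.1).ord = (γf c0.1).ord := congrArg Subtype.val h2
      exact Cardinal.ord_injective h3
    set D : Set (Set (∀ i, X i)) := Set.range (fun c : {c : ↥C // F c = t} => b c.1) with hD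
    have hDinj : Function.Injective (fun c : {c : ↥C // F c = t} => b c.1) := by
      intro c1 c2 h
      by_contra hne
      have hne' : c1.1.1 ≠ c2.1.1 := by
        intro h'
        exact hne (Subtype.ext (Subtype.ext h'))
      have hdisj := hC.2 c1.1.2 c2.1.2 hne'
      obtain ⟨x, hx⟩ := hbne c1.1
      have h' : b c1.1 = b c2.1 := h
      exact Set.disjoint_left.mp hdisj (hbsub c1.1 hx) (hbsub c2.1 (h' ▸ hx))
    have hach2 : AchIn (boxTopology (γf c0.1) X) univ #{c : ↥C // F c = t} := by
      refine ⟨D, ⟨?_, ?_⟩, fun u _ => Set.subset_univ u, Cardinal.mk_range_eq _ hDinj⟩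
      · rintro u ⟨c, rfl⟩
        refine ⟨isOpen_of_isBox X ⟨Uc c.1, hUo c.1, ?_, hUeq c.1⟩, hbne c.1⟩
        rw [← hsame c]
        exact hσγf c.1
      · rintro u ⟨c1, rfl⟩ v ⟨c2, rfl⟩ hne
        have hne' : c1.1.1 ≠ c2.1.1 := fun h' => hne (congrArg (fun c : {c : ↥C // F c = t} => b c.1) (Subtype.ext (Subtype.ext h')))
        exact Set.disjoint_of_subset (hbsub c1.1) (hbsub c2.1) (hC.2 c1.1.2 c2.1.2 hne')
    exact hach _ (hγf0 c0.1) (hγfκ c0.1) (achIn_mono hach2 hge)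
  have hcount := mk_le_mul_iSup F
  rw [hcard, Cardinal.mk_toType, Cardinal.card_ord] at hcount
  have hsup : (⨆ t, #{c : ↥C // F c = t}) < μ :=
    Cardinal.iSup_lt_of_isRegular hreg (by rwa [Cardinal.mk_toType, Cardinal.card_ord]) hfib
  exact absurd hcount (not_le.mpr (Cardinal.mul_lt_of_lt hreg.1 hκμ hsup))

end boxes

section ET
variable {Y : Type u}

/-- `W` is `κ`-big: every cardinal below `κ` is the size of some cellular family inside `W`. -/
def Big (tY : TopologicalSpace Y) (κ : Cardinal.{u}) (W : Set Y) : Prop :=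
  ∀ β < κ, AchIn tY W β

def Small (tY : TopologicalSpace Y) (κ : Cardinal.{u}) (W : Set Y) : Prop :=
  IsOpen[tY] W ∧ W.Nonempty ∧ ¬ Big tY κ W

lemma sn_lt_of_small {tY : TopologicalSpace Y} {κ : Cardinal.{u}} {W : Set Y}
    (hW : Small tY κ W) : sn tY W < κ := by
  have h := hW.2.2
  rw [Big] at h
  push_neg at h
  obtain ⟨β, hβκ, hβ⟩ := h
  exact lt_of_le_of_lt (sn_le_of_not hβ) hβκ

theorem erdos_tarski (tY : TopologicalSpace Y) {κ : Cardinal.{u}}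
    (hκ : ℵ₀ ≤ κ) (hcof : κ.ord.cof < κ)
    (hach : ∀ β < κ, AchIn tY univ β) : AchIn tY univ κ := by
  by_contra H
  have hκ0 : ℵ₀ < κ := by
    rcases lt_or_eq_of_le hκ with h | h
    · exact h
    · rw [← h] at hcof
      exact absurd hcof (not_lt.mpr Cardinal.isRegular_aleph0.2)
  have hsucc : ∀ δ < κ, Order.succ δ < κ := by
    intro δ hδ
    by_contra hc
    have he : κ = Order.succ δ := le_antisymm (not_lt.mp hc) (Order.succ_le_of_lt hδ)
    rcases le_or_gt ℵ₀ δ with h | h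
    · have h2 := (Cardinal.isRegular_succ h).2
      rw [← he] at h2
      exact absurd hcof (not_lt.mpr h2)
    · have h2 : Order.succ δ ≤ ℵ₀ := Order.succ_le_of_lt h
      rw [← he] at h2
      exact absurd (lt_of_le_of_lt h2 hκ0) (lt_irrefl κ)
  -- no cellular family has size ≥ κ
  have hbound : ∀ C : Set (Set Y), @IsCellular Y tY C → #C < κ := by
    intro C hC
    by_contra hc
    exact H (achIn_mono ⟨C, hC, fun u _ => Set.subset_univ u, rfl⟩ (not_lt.mp hc))
  -- Zorn: maximal cellular family of small sets
  obtain ⟨𝒜, hmax⟩ := zorn_subset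
      {𝒜 : Set (Set Y) | (∀ A ∈ 𝒜, Small tY κ A) ∧ 𝒜.Pairwise Disjoint} (by
    intro c hcS hchain
    refine ⟨⋃₀ c, ⟨?_, ?_⟩, fun s hs => Set.subset_sUnion_of_mem hs⟩
    · rintro A ⟨a, hac, hAa⟩
      exact (hcS hac).1 A hAa
    · rintro A ⟨a, hac, hAa⟩ B ⟨b, hbc, hBb⟩ hAB
      rcases hchain.total hac hbc with h | h
      · exact (hcS hbc).2 (h hAa) hBb hAB
      · exact (hcS hac).2 hAa (h hBb) hAB)
  have h𝒜small : ∀ A ∈ 𝒜, Small tY κ A := hmax.1.1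
  have h𝒜pd : 𝒜.Pairwise Disjoint := hmax.1.2
  by_cases hcase : ∃ W : Set Y, IsOpen[tY] W ∧ W.Nonempty ∧ ∀ A ∈ 𝒜, Disjoint W A
  · -- case (ii): there is an open set missing all of 𝒜; everything inside it is big
    obtain ⟨W, hWo, hWne, hWd⟩ := hcase
    have bigsub : ∀ V : Set Y, IsOpen[tY] V → V.Nonempty → V ⊆ W → Big tY κ V := by
      intro V hVo hVne hVW
      by_contra hVbig
      have hVsmall : Small tY κ V := ⟨hVo, hVne, hVbig⟩
      have hins : insert V 𝒜 ∈
          {𝒜 : Set (Set Y) | (∀ A ∈ 𝒜, Small tY κ A) ∧ 𝒜.Pairwise Disjoint} := by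
        constructor
        · rintro A (rfl | hA)
          · exact hVsmall
          · exact h𝒜small A hA
        · exact (Set.pairwise_insert).mpr
            ⟨h𝒜pd, fun A hA _ => ⟨Set.disjoint_of_subset_left hVW (hWd A hA),
              (Set.disjoint_of_subset_left hVW (hWd A hA)).symm⟩⟩
      have hsub := hmax.2 hins (Set.subset_insert V 𝒜)
      have hV𝒜 : V ∈ 𝒜 := hsub (Set.mem_insert V 𝒜)
      exact hVne.ne_empty (by
        simpa using disjoint_self.mp (Set.disjoint_of_subset_left hVW (hWd V hV𝒜)))
    -- a cofinal family
    obtain ⟨S0, hub, hmk⟩ := Order.exists_cof_eq (α := κ.ord.ToType)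
    rw [Ordinal.cof_toType] at hmk
    have hθκ : #S0 < κ := hmk ▸ hcof
    have hg : ∀ s : ↥S0, #(Set.Iio s.1) < κ := fun s => Cardinal.mk_Iio_ord_toType s.1
    have hgsup : ∀ β, β < κ → ∃ s : ↥S0, β ≤ #(Set.Iio s.1) := by
      intro β hβ
      set x : κ.ord.ToType := Ordinal.ToType.mk ⟨β.ord, Cardinal.ord_lt_ord.mpr hβ⟩
        with hx
      obtain ⟨s, hs, hsx⟩ := hub x
      refine ⟨⟨s, hs⟩, ?_⟩
      have h1 : Set.Iio x ⊆ Set.Iio s := fun y hy => lt_of_lt_of_le hy hsx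
      refine le_trans (le_of_eq ?_) (Cardinal.mk_le_mk_of_subset h1)
      have h2 := (@Ordinal.card_typein κ.ord.ToType (fun a b => a < b) isWellOrder_lt x).symm
      have h3 : #(Set.Iio x) = #{ y // y < x } := rfl
      rw [h3, h2, hx]
      rw [Ordinal.ToType.mk_apply]
      exact (Cardinal.card_ord β).symm.trans (congrArg Ordinal.card (Ordinal.typein_enum _ _).symm)
    -- a cellular family of size #S0 inside W, all of whose members are big
    obtain ⟨𝒲, h𝒲, h𝒲sub, h𝒲card⟩ := bigsub W hWo hWne subset_rfl (#S0) hθκ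
    obtain ⟨e⟩ : Nonempty (↥S0 ≃ ↥𝒲) := Cardinal.eq.mp h𝒲card.symm
    have hbigw : ∀ w : ↥𝒲, Big tY κ w.1 :=
      fun w => bigsub w.1 (h𝒲.1 w.1 w.2).1 (h𝒲.1 w.1 w.2).2 (h𝒲sub w.1 w.2)
    have hDex : ∀ s : ↥S0, ∃ D : Set (Set Y), @IsCellular Y tY D ∧
        (∀ u ∈ D, u ⊆ (e s).1) ∧ #D = #(Set.Iio s.1) :=
      fun s => hbigw (e s) _ (hg s)
    choose D hD1 hD2 hD3 using hDex
    set 𝒟 : Set (Set Y) := ⋃ s : ↥S0, D s with h𝒟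
    have h𝒟cell : @IsCellular Y tY 𝒟 := by
      constructor
      · rintro u hu
        obtain ⟨s, hs⟩ := Set.mem_iUnion.mp hu
        exact (hD1 s).1 u hs
      · rintro u hu v hv huv
        obtain ⟨s, hs⟩ := Set.mem_iUnion.mp hu
        obtain ⟨s', hs'⟩ := Set.mem_iUnion.mp hv
        by_cases hss : s = s'
        · exact (hD1 s).2 hs (hss ▸ hs') huv
        · have hws : (e s).1 ≠ (e s').1 := by
            intro h
            exact hss (e.injective (Subtype.ext h))
          exact Set.disjoint_of_subset ((hD2 s) u hs) ((hD2 s') v hs')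
            (h𝒲.2 (e s).2 (e s').2 hws)
    have h𝒟big : κ ≤ #𝒟 := by
      by_contra hc
      obtain ⟨s, hsge⟩ := hgsup (Order.succ #𝒟) (hsucc _ (not_le.mp hc))
      have : #(D s) ≤ #𝒟 := Cardinal.mk_le_mk_of_subset (Set.subset_iUnion D s)
      rw [hD3 s] at this
      exact absurd (le_trans hsge this) (not_le.mpr (Order.lt_succ _))
    exact H (achIn_mono ⟨𝒟, h𝒟cell, fun u _ => Set.subset_univ u, rfl⟩ h𝒟big)
  · -- case (i): 𝒜 is "dense"
    push_neg at hcase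
    have hmeet : ∀ W : Set Y, IsOpen[tY] W → W.Nonempty → ∃ A ∈ 𝒜, ¬ Disjoint W A :=
      hcase
    have h𝒜card : #𝒜 < κ := hbound 𝒜 ⟨fun A hA => ⟨(h𝒜small A hA).1, (h𝒜small A hA).2.1⟩, h𝒜pd⟩
    -- the s-numbers of members of 𝒜 are cofinal in κ
    have hsup : ∀ τ, τ < κ → ∃ A ∈ 𝒜, τ < sn tY A := by
      intro τ hτ
      by_contra hc
      push_neg at hc
      set ν : Cardinal.{u} := Order.succ ((#𝒜 ⊔ τ) ⊔ ℵ₀) with hν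
      have hνκ : ν < κ := hsucc _ (sup_lt_iff.mpr ⟨sup_lt_iff.mpr ⟨h𝒜card, hτ⟩, hκ0⟩)
      obtain ⟨C, hC, -, hCcard⟩ := hach ν hνκ
      have hFex : ∀ c : ↥C, ∃ A : ↥𝒜, ¬ Disjoint c.1 A.1 := by
        intro c
        obtain ⟨A, hA, hdA⟩ := hmeet c.1 (hC.1 c.1 c.2).1 (hC.1 c.1 c.2).2
        exact ⟨⟨A, hA⟩, hdA⟩
      choose F hF using hFex
      have hfib : ∀ A : ↥𝒜, #{c : ↥C // F c = A} ≤ τ := by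
        intro A
        have hachA : AchIn tY A.1 #{c : ↥C // F c = A} := by
          refine ⟨Set.range (fun c : {c : ↥C // F c = A} => c.1.1 ∩ A.1), ⟨?_, ?_⟩, ?_, ?_⟩
          · rintro u ⟨c, rfl⟩
            refine ⟨((hC.1 c.1.1 c.1.2).1).inter (h𝒜small A.1 A.2).1, ?_⟩
            have hne3 := Set.not_disjoint_iff_nonempty_inter.mp (hF c.1)
            rw [c.2] at hne3
            exact hne3
          · rintro u ⟨c1, rfl⟩ v ⟨c2, rfl⟩ hne
            have hc12 : c1.1.1 ≠ c2.1.1 := by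
              intro h
              exact hne (by show c1.1.1 ∩ A.1 = c2.1.1 ∩ A.1; rw [h])
            exact Set.disjoint_of_subset Set.inter_subset_left Set.inter_subset_left
              (hC.2 c1.1.2 c2.1.2 hc12)
          · rintro u ⟨c, rfl⟩
            exact Set.inter_subset_right
          · refine Cardinal.mk_range_eq _ ?_
            intro c1 c2 h
            have hne : (c1.1.1 ∩ A.1).Nonempty := by
              rw [← Set.not_disjoint_iff_nonempty_inter]
              have := hF c1.1
              rwa [c1.2] at this
            by_contra hc'
            have hc12 : c1.1.1 ≠ c2.1.1 := fun h' => hc' (Subtype.ext (Subtype.ext h'))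
            obtain ⟨x, hx1, hxA⟩ := hne
            have heq : c1.1.1 ∩ A.1 = c2.1.1 ∩ A.1 := h
            have hx2 : x ∈ c2.1.1 ∩ A.1 := heq ▸ ⟨hx1, hxA⟩
            exact Set.disjoint_left.mp (hC.2 c1.1.2 c2.1.2 hc12) hx1 hx2.1
        have h1 : #{c : ↥C // F c = A} < sn tY A.1 := lt_sn_iff.mpr hachA
        exact le_of_lt (lt_of_lt_of_le h1 (hc A.1 A.2))
      have hcount := mk_le_mul_iSup F
      rw [hCcard] at hcount
      have hsupfib : (⨆ A : ↥𝒜, #{c : ↥C // F c = A}) ≤ τ := ciSup_le' hfib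
      have hbig : ν ≤ ((#𝒜 ⊔ τ) ⊔ ℵ₀) := by
        calc ν ≤ #↥𝒜 * ⨆ A : ↥𝒜, #{c : ↥C // F c = A} := hcount
          _ ≤ ((#𝒜 ⊔ τ) ⊔ ℵ₀) * ((#𝒜 ⊔ τ) ⊔ ℵ₀) :=
            mul_le_mul' (le_sup_of_le_left le_sup_left)
              (le_trans hsupfib (le_sup_of_le_left le_sup_right))
          _ = ((#𝒜 ⊔ τ) ⊔ ℵ₀) := Cardinal.mul_eq_self le_sup_right
      exact absurd hbig (not_le.mpr (Order.lt_succ _))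
    -- the set of achieved s-numbers
    set R : Set Cardinal.{u} := (fun A => sn tY A) '' 𝒜 with hR
    have hRκ : ∀ r ∈ R, r < κ := by
      rintro r ⟨A, hA, rfl⟩
      exact sn_lt_of_small (h𝒜small A hA)
    -- the value to use inside each A
    set βf : Set Y → Cardinal.{u} := fun A => sSup {x ∈ R | x < sn tY A} with hβf
    have hDex : ∀ A : ↥𝒜, ∃ D : Set (Set Y),
        (βf A.1 < sn tY A.1 → (@IsCellular Y tY D ∧ (∀ u ∈ D, u ⊆ A.1) ∧ #D = βf A.1)) ∧
        (¬ βf A.1 < sn tY A.1 → D = ∅) := by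
      intro A
      by_cases h : βf A.1 < sn tY A.1
      · obtain ⟨D, hD⟩ := lt_sn_iff.mp h
        exact ⟨D, fun _ => hD, fun hc => absurd h hc⟩
      · exact ⟨∅, fun hc => absurd hc h, fun _ => rfl⟩
    choose D hD1 hD2 using hDex
    set 𝒟 : Set (Set Y) := ⋃ A : ↥𝒜, D A with h𝒟
    have h𝒟cell : @IsCellular Y tY 𝒟 := by
      constructor
      · rintro u hu
        obtain ⟨A, hA⟩ := Set.mem_iUnion.mp hu
        by_cases h : βf A.1 < sn tY A.1
        · exact ((hD1 A) h).1.1 u hA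
        · rw [hD2 A h] at hA; exact absurd hA (Set.notMem_empty u)
      · rintro u hu v hv huv
        obtain ⟨A, hA⟩ := Set.mem_iUnion.mp hu
        obtain ⟨A', hA'⟩ := Set.mem_iUnion.mp hv
        have h : βf A.1 < sn tY A.1 := by
          by_contra h; rw [hD2 A h] at hA; exact absurd hA (Set.notMem_empty u)
        have h' : βf A'.1 < sn tY A'.1 := by
          by_contra h'; rw [hD2 A' h'] at hA'; exact absurd hA' (Set.notMem_empty v)
        by_cases hAA : A = A'
        · exact ((hD1 A) h).1.2 hA (hAA ▸ hA') huv
        · have hne : A.1 ≠ A'.1 := fun hh => hAA (Subtype.ext hh)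
          exact Set.disjoint_of_subset (((hD1 A) h).2.1 u hA) (((hD1 A') h').2.1 v hA')
            (h𝒜pd A.2 A'.2 hne)
    have h𝒟big : κ ≤ #𝒟 := by
      have key : ∀ τ, τ < κ → ∃ A : ↥𝒜, τ < #(D A) := by
        intro τ hτ
        obtain ⟨A0, hA0, hA0s⟩ := hsup τ hτ
        set r : Cardinal.{u} := sn tY A0 with hr
        have hrR : r ∈ R := ⟨A0, hA0, rfl⟩
        have hrκ : r < κ := hRκ r hrR
        have hne2 : {x ∈ R | r < x}.Nonempty := by
          obtain ⟨A1, hA1, hA1s⟩ := hsup r hrκ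
          exact ⟨sn tY A1, ⟨A1, hA1, rfl⟩, hA1s⟩
        have hmem := csInf_mem hne2
        set r'' : Cardinal.{u} := sInf {x ∈ R | r < x} with hr''
        obtain ⟨⟨A2, hA2, hA2eq0⟩, hrr''⟩ := hmem
        have hA2eq : sn tY A2 = r'' := hA2eq0
        have hβfA2 : βf A2 = r := by
          rw [hβf]
          dsimp only
          refine le_antisymm (csSup_le ⟨r, hrR, hA2eq ▸ hrr''⟩ ?_) (le_csSup ?_ ⟨hrR, hA2eq ▸ hrr''⟩)
          · rintro x ⟨hxR, hx⟩
            by_contra hc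
            push_neg at hc
            have : r'' ≤ x := csInf_le' ⟨hxR, hc⟩
            rw [hA2eq] at hx
            exact absurd (lt_of_le_of_lt this hx) (lt_irrefl r'')
          · exact ⟨κ, fun x hx => le_of_lt (hRκ x hx.1)⟩
        have hlt : βf A2 < sn tY A2 := by
          rw [hβfA2, hA2eq]
          exact hrr''
        refine ⟨⟨A2, hA2⟩, ?_⟩
        rw [((hD1 ⟨A2, hA2⟩) hlt).2.2, hβfA2]
        exact hA0s
      by_contra hc
      obtain ⟨A, hA⟩ := key (Order.succ #𝒟) (hsucc _ (not_le.mp hc))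
      have : #(D A) ≤ #𝒟 := Cardinal.mk_le_mk_of_subset (Set.subset_iUnion D A)
      exact absurd (lt_of_lt_of_le hA this) (not_lt.mpr (Order.le_succ _))
    exact H (achIn_mono ⟨𝒟, h𝒟cell, fun u _ => Set.subset_univ u, rfl⟩ h𝒟big)

end ET

lemma add_one_le_sup (δ : Cardinal.{u}) : δ + 1 ≤ δ ⊔ ℵ₀ := by
  calc δ + 1 ≤ (δ ⊔ ℵ₀) + (δ ⊔ ℵ₀) :=
        add_le_add le_sup_left (le_trans Cardinal.one_le_aleph0 le_sup_right)
    _ = δ ⊔ ℵ₀ := Cardinal.add_eq_self le_sup_right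

end ET14

open ET14

theorem stmt14 (κ : Cardinal.{u}) (hκ : ℵ₀ < κ) (hlim : Order.IsSuccLimit κ)
    {ι : Type u} (X : ι → Type u) [∀ i, TopologicalSpace (X i)]
    (hI : κ ≤ #ι) (hS : ∀ i, 3 ≤ souslin (X i)) :
    ∀ α : Cardinal.{u},
      α = (⨆ γ : Set.Ico ℵ₀ κ, @souslin (∀ i, X i) (boxTopology γ.1 X)) →
      ((κ ≤ α ∧ α ≤ @souslin (∀ i, X i) (boxTopology κ X) ∧
          @souslin (∀ i, X i) (boxTopology κ X) ≤ Order.succ α ∧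
          Order.succ κ ≤ @souslin (∀ i, X i) (boxTopology κ X)) ∧
        (α.IsRegular ∧ κ < α → @souslin (∀ i, X i) (boxTopology κ X) = α) ∧
        ((¬α.IsRegular ∨ κ = α) →
          @souslin (∀ i, X i) (boxTopology κ X) = Order.succ α)) := by
  intro α hα
  have hsucclt : ∀ δ, δ < κ → Order.succ δ < κ := fun δ h => hlim.succ_lt h
  have hBdd : BddAbove (Set.range fun γ : Set.Ico ℵ₀ κ =>
      @souslin (∀ i, X i) (boxTopology γ.1 X)) := by
    refine ⟨Order.succ #(Set (∀ i, X i)), ?_⟩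
    rintro x ⟨γ, rfl⟩
    show @souslin (∀ i, X i) (boxTopology γ.1 X) ≤ _
    rw [souslin_eq_sn]
    exact sn_le_of_not (not_achIn_top _ _)
  haveI hNe : Nonempty (Set.Ico ℵ₀ κ) := ⟨⟨ℵ₀, le_refl _, hκ⟩⟩
  have hsleα : ∀ γ, ∀ h : γ ∈ Set.Ico ℵ₀ κ, @souslin (∀ i, X i) (boxTopology γ X) ≤ α := by
    intro γ h
    rw [hα]
    exact le_ciSup hBdd ⟨γ, h⟩
  have hachsmall : ∀ lam, ℵ₀ ≤ lam → lam < κ →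
      AchIn (boxTopology (Order.succ lam) X) univ lam := by
    intro lam h1 h2
    refine ach_box X lam (Order.succ lam) (le_trans h2.le hI) ?_ hS
    intro δ hδ
    rw [Order.lt_succ_iff]
    exact le_trans (add_one_le_sup δ) (sup_le hδ.le h1)
  -- κ ≤ α
  have hκα : κ ≤ α := by
    by_contra hc
    set lam : Cardinal.{u} := α ⊔ ℵ₀ with hlam
    have hlamκ : lam < κ := sup_lt_iff.mpr ⟨not_le.mp hc, hκ⟩
    have hach := hachsmall lam le_sup_right hlamκ
    have h1 : lam < @souslin (∀ i, X i) (boxTopology (Order.succ lam) X) := by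
      rw [souslin_eq_sn]
      exact lt_sn_iff.mpr hach
    have h2 := hsleα (Order.succ lam)
      ⟨le_trans le_sup_right (Order.le_succ lam), hsucclt lam hlamκ⟩
    exact absurd (lt_of_lt_of_le h1 h2) (not_lt.mpr le_sup_left)
  have hα0 : ℵ₀ ≤ α := le_trans hκ.le hκα
  -- α ≤ S κ
  have hαS : α ≤ @souslin (∀ i, X i) (boxTopology κ X) := by
    rw [hα]
    refine ciSup_le' ?_
    rintro ⟨γ, hγ1, hγ2⟩
    exact souslin_mono (boxTopology_mono X hγ2.le)
  -- κ is achieved in the κ-box topology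
  have hachκ : AchIn (boxTopology κ X) univ κ := by
    refine ach_box X κ κ hI ?_ hS
    intro δ hδ
    exact lt_of_le_of_lt (add_one_le_sup δ) (sup_lt_iff.mpr ⟨hδ, hκ⟩)
  have hκ'S : Order.succ κ ≤ @souslin (∀ i, X i) (boxTopology κ X) := by
    rw [souslin_eq_sn]
    exact Order.succ_le_of_lt (lt_sn_iff.mpr hachκ)
  -- upper bound machinery
  have hnotach : ∀ μ : Cardinal.{u}, μ.IsRegular → κ < μ → α ≤ μ →
      ¬ AchIn (boxTopology κ X) univ μ := by
    intro μ hreg hκμ hαμ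
    refine ub X hκ hsucclt hreg hκμ ?_
    intro γ h1 h2 hach
    have h3 : μ < @souslin (∀ i, X i) (boxTopology γ X) := by
      rw [souslin_eq_sn]
      exact lt_sn_iff.mpr hach
    exact absurd (lt_of_lt_of_le h3 (hsleα γ ⟨h1, h2⟩)) (not_lt.mpr hαμ)
  have hSα' : @souslin (∀ i, X i) (boxTopology κ X) ≤ Order.succ α := by
    rw [souslin_eq_sn]
    refine sn_le_of_not (hnotach (Order.succ α) (Cardinal.isRegular_succ hα0)
      (lt_of_le_of_lt hκα (Order.lt_succ α)) (Order.le_succ α))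
  refine ⟨⟨hκα, hαS, hSα', hκ'S⟩, ?_, ?_⟩
  · rintro ⟨hreg, hκα'⟩
    refine le_antisymm ?_ hαS
    rw [souslin_eq_sn]
    exact sn_le_of_not (hnotach α hreg hκα' le_rfl)
  · intro hcase
    refine le_antisymm hSα' ?_
    rcases hcase with hsing | hκeq
    · -- α singular: use Erdős–Tarski
      have hcof : α.ord.cof < α := by
        rcases lt_or_ge α.ord.cof α with h | h
        · exact h
        · exact absurd ⟨hα0, h⟩ hsing
      have hbelow : ∀ β, β < α → AchIn (boxTopology κ X) univ β := by
        intro β hβ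
        have : β < sn (boxTopology κ X) univ := by
          rw [← souslin_eq_sn]
          exact lt_of_lt_of_le hβ hαS
        exact lt_sn_iff.mp this
      have hET := erdos_tarski (boxTopology κ X) hα0 hcof hbelow
      rw [souslin_eq_sn]
      exact Order.succ_le_of_lt (lt_sn_iff.mpr hET)
    · rw [← hκeq, souslin_eq_sn]
      exact Order.succ_le_of_lt (lt_sn_iff.mpr hachκ)
end

section
/- Let α ≥ 2 and κ ≥ ω be cardinals and let {X_i : i ∈ I} be a set of topological spaces with d(X_i) ≤ α for each i ∈ I. Then S((X_I)_κ) ≤ (α^{<κ})⁺. -/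
open Cardinal TopologicalSpace Set

universe u

/-- The density character of a topological space: the least cardinality of a dense subset
(finite values allowed). -/
noncomputable def dens (X : Type u) [TopologicalSpace X] : Cardinal.{u} :=
  sInf {c | ∃ D : Set X, Dense D ∧ #D = c}

namespace Stmt15Aux

variable {I V A : Type u}

open Classical in
/-- Restriction of a coded partial function to a set. -/
noncomputable def restr (B : Set I) (f : I → Option V) : I → Option V :=
  fun i => if i ∈ B then f i else none

/-- Support of a coded partial function. -/
def psupp (f : I → Option V) : Set I := {i | f i ≠ none}

lemma psupp_restr (B : Set I) (f : I → Option V) :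
    psupp (restr B f) = psupp f ∩ B := by
  classical
  ext i
  by_cases h : i ∈ B <;> simp [psupp, restr, h]

lemma restr_apply_of_mem {B : Set I} {f : I → Option V} {i : I} (h : i ∈ B) :
    restr B f i = f i := by simp [restr, h]

lemma kappa_le_powerlt (α κ : Cardinal.{u}) (hα : 2 ≤ α) (hκ : ℵ₀ ≤ κ) : κ ≤ α ^< κ := by
  by_contra h
  push_neg at h
  have h1 : α ^ (α ^< κ) ≤ α ^< κ := le_powerlt α h
  have h2 : (2 : Cardinal) ^ (α ^< κ) ≤ α ^ (α ^< κ) := power_le_power_right hα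
  exact absurd (h2.trans h1) (cantor _).not_ge

lemma theta_spec (α lam κ : Cardinal.{u}) (hα : 2 ≤ α) (hκ : ℵ₀ ≤ κ) (hlam : lam < κ) :
    ∃ θ : Cardinal.{u}, ℵ₀ ≤ θ ∧ α ≤ θ ∧ Order.succ lam ≤ θ ∧ θ ^ lam ≤ θ ∧ θ ≤ α ^< κ := by
  have hα0 : α ≠ 0 := by positivity
  refine ⟨max (α ^ max lam 1) ℵ₀, le_max_right _ _, ?_, ?_, ?_, ?_⟩
  · calc α = α ^ (1 : Cardinal) := (power_one α).symm
      _ ≤ α ^ max lam 1 := power_le_power_left hα0 (le_max_right _ _)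
      _ ≤ _ := le_max_left _ _
  · rcases lt_or_ge lam ℵ₀ with hfin | hinf
    · exact (Order.succ_le_of_lt hfin).trans (le_max_right _ _)
    · have h1 : Order.succ lam ≤ 2 ^ lam := Order.succ_le_of_lt (cantor lam)
      have h2 : (2 : Cardinal) ^ lam ≤ α ^ lam := power_le_power_right hα
      have h3 : α ^ lam = α ^ max lam 1 := by
        rw [max_eq_left ((one_le_aleph0).trans hinf)]
      exact (h1.trans h2).trans (h3.le.trans (le_max_left _ _))
  · rcases lt_or_ge lam ℵ₀ with hfin | hinf
    · obtain ⟨n, rfl⟩ := lt_aleph0.1 hfin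
      rcases Nat.eq_zero_or_pos n with rfl | hn
      · simp only [Nat.cast_zero, power_zero]
        exact le_trans one_le_aleph0 (le_max_right _ _)
      · rw [power_natCast, power_nat_eq (le_max_right _ _) hn]
    · have h3 : α ^ lam = α ^ max lam 1 := by
        rw [max_eq_left ((one_le_aleph0).trans hinf)]
      have hℵ : ℵ₀ ≤ α ^ lam := hinf.trans ((cantor lam).le.trans (power_le_power_right hα))
      have hmax : max (α ^ max lam 1) ℵ₀ = α ^ lam := by
        rw [← h3, max_eq_left hℵ]
      rw [hmax, ← power_mul, mul_eq_self hinf]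
  · refine max_le ?_ (hκ.trans (kappa_le_powerlt α κ hα hκ))
    refine le_powerlt α ?_
    exact max_lt hlam (lt_of_lt_of_le one_lt_aleph0 hκ)

lemma pigeonhole {A : Type u} (κ μ : Cardinal.{u}) (hκ : ℵ₀ ≤ κ) (hκμ : κ ≤ μ)
    (hA : Order.succ μ ≤ #A) (f : A → Cardinal.{u}) (hf : ∀ a, f a < κ) :
    ∃ lam, lam < κ ∧ Order.succ μ ≤ #{a : A // f a = lam} := by
  by_contra h
  push_neg at h
  have hfib : ∀ lam, lam < κ → #{a : A // f a = lam} ≤ μ := fun lam hl =>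
    Order.lt_succ_iff.1 (h lam hl)
  classical
  let s : ↥(Iio κ) → Set (ULift.{u + 1} A) := fun c => {a | f a.down = c.1}
  have hcover : ⋃ c, s c = Set.univ := by
    ext a
    simp only [mem_iUnion, mem_univ, iff_true]
    exact ⟨⟨f a.down, hf a.down⟩, rfl⟩
  have hsc : ∀ c, #(s c) ≤ Cardinal.lift.{u + 1} μ := by
    intro c
    obtain ⟨e⟩ := le_def _ _ |>.1 ((hfib c.1 c.2).trans_eq (mk_out μ).symm)
    have : Function.Injective (fun a : ↥(s c) => ULift.up.{u + 1} (e ⟨a.1.down, a.2⟩)) := by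
      intro a b hab
      have := e.injective (congrArg ULift.down hab)
      have h2 : a.1.down = b.1.down := congrArg Subtype.val this
      exact Subtype.ext (ULift.ext _ _ h2)
    calc #(s c) ≤ #(ULift.{u + 1} μ.out) := mk_le_of_injective this
      _ = Cardinal.lift.{u + 1} μ := by rw [mk_uLift, mk_out]
  have h2 : #(↥(Iio κ)) ≤ Cardinal.lift.{u + 1} κ := by
    have einj : Function.Injective
        (fun c : ↥(Iio κ) => (⟨c.1.ord, ord_lt_ord.2 c.2⟩ : ↥(Iio κ.ord))) := by
      intro a b hab
      exact Subtype.ext (ord_injective (congrArg Subtype.val hab))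
    calc #(↥(Iio κ)) ≤ #(↥(Iio κ.ord)) := mk_le_of_injective einj
      _ = Cardinal.lift.{u + 1} κ.ord.card := Ordinal.mk_Iio_ordinal _
      _ = Cardinal.lift.{u + 1} κ := by rw [card_ord]
  have h1 : Cardinal.lift.{u + 1} #A ≤ #(↥(Iio κ)) * Cardinal.lift.{u + 1} μ := by
    calc Cardinal.lift.{u + 1} #A = #(ULift.{u + 1} A) := (mk_uLift A).symm
      _ = #(Set.univ : Set (ULift.{u + 1} A)) := mk_univ.symm
      _ = #(⋃ c, s c) := by rw [hcover]
      _ ≤ #(↥(Iio κ)) * ⨆ c, #(s c) := mk_iUnion_le _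
      _ ≤ #(↥(Iio κ)) * Cardinal.lift.{u + 1} μ := by
          exact mul_le_mul_right (ciSup_le' hsc) _
  have h3 : Cardinal.lift.{u + 1} #A ≤ Cardinal.lift.{u + 1} κ * Cardinal.lift.{u + 1} μ :=
    h1.trans (mul_le_mul_left h2 _)
  rw [← lift_mul, mul_eq_right (hκ.trans hκμ) hκμ
    (ne_of_gt (lt_of_lt_of_le aleph0_pos hκ))] at h3
  have h4 : #A ≤ μ := lift_le.1 h3
  exact absurd (hA.trans h4) (Order.lt_succ μ).not_ge

lemma count_partial (B : Set I) (lam θ : Cardinal.{u})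
    (hθ : ℵ₀ ≤ θ) (hB : #B ≤ θ) (hV : #V ≤ θ) (hpow : θ ^ lam ≤ θ) :
    #{f : I → Option V // psupp f ⊆ B ∧ #(psupp f) ≤ lam} ≤ θ := by
  classical
  -- map each partial function to its graph
  let G : {f : I → Option V // psupp f ⊆ B ∧ #(psupp f) ≤ lam} →
      {t : Set (I × V) // t ⊆ B ×ˢ (Set.univ : Set V) ∧ #t ≤ lam} := fun f =>
    ⟨{p : I × V | f.1 p.1 = some p.2}, by
      constructor
      · rintro ⟨i, v⟩ hp
        exact ⟨f.2.1 (by simp only [psupp, mem_setOf_eq]; rw [hp]; simp), trivial⟩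
      · have hinj : Function.Injective
            (fun p : {p : I × V | f.1 p.1 = some p.2} => (⟨p.1.1, by
              have := p.2
              simp only [mem_setOf_eq] at this
              simp only [psupp, mem_setOf_eq, this]
              simp⟩ : psupp f.1)) := by
          rintro ⟨⟨i, v⟩, hp⟩ ⟨⟨j, w⟩, hq⟩ h
          simp only [Subtype.mk.injEq] at h
          simp only [mem_setOf_eq] at hp hq
          subst h
          have hvw : v = w := Option.some_inj.1 (hp.symm.trans hq)
          subst hvw
          rfl
        exact (mk_le_of_injective hinj).trans f.2.2⟩
  have hGinj : Function.Injective G := by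
    rintro ⟨f, hf⟩ ⟨g, hg⟩ h
    simp only [G, Subtype.mk.injEq] at h ⊢
    funext i
    rcases hfi : f i with _ | v
    · rcases hgi : g i with _ | w
      · rfl
      · have : (i, w) ∈ {p : I × V | g p.1 = some p.2} := hgi
        rw [← h] at this
        simp only [mem_setOf_eq] at this
        rw [hfi] at this
        exact absurd this (by simp)
    · have : (i, v) ∈ {p : I × V | f p.1 = some p.2} := hfi
      rw [h] at this
      simp only [mem_setOf_eq] at this
      exact this.symm
  have h1 : #{f : I → Option V // psupp f ⊆ B ∧ #(psupp f) ≤ lam} ≤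
      #{t : Set (I × V) // t ⊆ B ×ˢ (Set.univ : Set V) ∧ #t ≤ lam} :=
    mk_le_of_injective hGinj
  have h2 := mk_bounded_subset_le (B ×ˢ (Set.univ : Set V)) lam
  have h3 : #(B ×ˢ (Set.univ : Set V) : Set (I × V)) ≤ θ := by
    calc #(B ×ˢ (Set.univ : Set V) : Set (I × V))
        = #(↥B × ↥(Set.univ : Set V)) := mk_congr (Equiv.Set.prod _ _)
      _ = #B * #(Set.univ : Set V) := by rw [mk_prod, lift_id, lift_id]
      _ ≤ θ * θ := mul_le_mul' hB (mk_univ.trans_le hV)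
      _ = θ := mul_eq_self hθ
  refine h1.trans (h2.trans ?_)
  exact (power_le_power_right (max_le h3 hθ)).trans hpow

/-- Transfinite iteration of a one-step closure operation along a well-order. -/
noncomputable def iterCl (W : Type u) [LT W] [WellFoundedLT W]
    (step : Set I → Set I) : W → Set I :=
  WellFoundedLT.fix (fun x ih => ⋃ y : {y // y < x}, step (ih y y.2))

lemma iterCl_eq (W : Type u) [LT W] [WellFoundedLT W]
    (step : Set I → Set I) (x : W) :
    iterCl W step x = ⋃ y : {y : W // y < x}, step (iterCl W step y) := by
  rw [iterCl, WellFoundedLT.fix_eq]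

set_option maxHeartbeats 2000000 in
/-- The key combinatorial lemma: a family of pairwise "explicitly incompatible" partial
functions with supports of size `≤ lam` and values in a set of size `≤ θ` has size at
most `θ`, provided `θ` is infinite, `lam⁺ ≤ θ` and `θ ^ lam ≤ θ`. -/
lemma core (lam θ : Cardinal.{u}) (hθ : ℵ₀ ≤ θ)
    (hsucc : Order.succ lam ≤ θ) (hpow : θ ^ lam ≤ θ) (hV : #V ≤ θ)
    (F : A → I → Option V)
    (hsupp : ∀ ξ, #(psupp (F ξ)) ≤ lam)
    (hinc : ∀ ξ η : A, ξ ≠ η → ∃ i, F ξ i ≠ none ∧ F η i ≠ none ∧ F ξ i ≠ F η i) :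
    #A ≤ θ := by
  classical
  by_contra hA
  push_neg at hA
  have hlamθ : lam ≤ θ := (Order.le_succ lam).trans hsucc
  -- the regular chain length
  set ρ : Cardinal.{u} := max (Order.succ lam) ℵ₀ with hρdef
  have hρreg : ρ.IsRegular := by
    rcases lt_or_ge lam ℵ₀ with h | h
    · rw [hρdef, max_eq_right (Order.succ_le_of_lt h)]
      exact isRegular_aleph0
    · rw [hρdef, max_eq_left (h.trans (Order.le_succ lam))]
      exact isRegular_succ h
  have hlamρ : lam < ρ := (Order.lt_succ lam).trans_le (le_max_left _ _)
  have hρθ : ρ ≤ θ := max_le hsucc hθ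
  set W := ρ.ord.ToType with hWdef
  have hW : #W = ρ := mk_ord_toType ρ
  -- the selection machinery
  let sel : Set I → (I → Option V) → Option A := fun B g =>
    if h : ∃ ξ, restr B (F ξ) = g then some h.choose else none
  let ChosenAt : Set I → Set A := fun B => {ξ | ∃ g, sel B g = some ξ}
  let step : Set I → Set I := fun B => B ∪ ⋃ ξ ∈ ChosenAt B, psupp (F ξ)
  have haux : ∀ B g ξ, sel B g = some ξ → restr B (F ξ) = g := by
    intro B g ξ h
    by_cases hh : ∃ ζ, restr B (F ζ) = g
    · have hs : sel B g = some hh.choose := dif_pos hh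
      rw [h] at hs
      have : ξ = hh.choose := Option.some_inj.1 hs
      rw [this]
      exact hh.choose_spec
    · have : sel B g = none := dif_neg hh
      rw [h] at this
      exact absurd this (by simp)
  have hChosenAt : ∀ B : Set I, #B ≤ θ → #(ChosenAt B) ≤ θ := by
    intro B hB
    have hinj : Function.Injective (fun ξ : ChosenAt B =>
        (⟨restr B (F ξ.1), by
          rw [psupp_restr]
          exact ⟨inter_subset_right, (mk_le_mk_of_subset inter_subset_left).trans
            (hsupp ξ.1)⟩⟩ : {f : I → Option V // psupp f ⊆ B ∧ #(psupp f) ≤ lam})) := by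
      rintro ⟨ξ, g₁, hg₁⟩ ⟨η, g₂, hg₂⟩ h
      simp only [Subtype.mk.injEq] at h
      have e₁ : restr B (F ξ) = g₁ := haux _ _ _ hg₁
      have e₂ : restr B (F η) = g₂ := haux _ _ _ hg₂
      apply Subtype.ext
      show ξ = η
      have : g₁ = g₂ := by rw [← e₁, ← e₂, h]
      rw [← this] at hg₂
      rw [hg₁] at hg₂
      exact Option.some_inj.1 hg₂
    exact (mk_le_of_injective hinj).trans (count_partial B lam θ hθ hB hV hpow)
  have hstep : ∀ B : Set I, #B ≤ θ → #(step B) ≤ θ := by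
    intro B hB
    have h1 : #(⋃ ξ ∈ ChosenAt B, psupp (F ξ)) ≤ #(ChosenAt B) * lam := by
      refine (mk_biUnion_le _ _).trans ?_
      refine mul_le_mul_right (ciSup_le' ?_) _
      intro ξ
      exact hsupp ξ.1
    calc #(step B) ≤ #B + #(⋃ ξ ∈ ChosenAt B, psupp (F ξ)) := mk_union_le _ _
      _ ≤ θ + θ * θ := add_le_add hB (h1.trans (mul_le_mul' (hChosenAt B hB) hlamθ))
      _ = θ := by rw [mul_eq_self hθ, add_eq_self hθ]
  -- the chain
  have hiter : ∀ x : W, #(iterCl W step x) ≤ θ := by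
    intro x
    induction x using WellFoundedLT.induction with
    | ind x ih =>
      rw [iterCl_eq]
      refine (mk_iUnion_le _).trans ?_
      have h1 : #{y : W // y < x} ≤ θ := (mk_subtype_le _).trans (hW.le.trans hρθ)
      have h2 : ⨆ y : {y : W // y < x}, #(step (iterCl W step y.1)) ≤ θ :=
        ciSup_le' fun y => hstep _ (ih y.1 y.2)
      exact (mul_le_mul' h1 h2).trans (mul_eq_self hθ).le
  set Btot : Set I := ⋃ x : W, step (iterCl W step x) with hBtot
  set Chosen : Set A := ⋃ x : W, ChosenAt (iterCl W step x) with hChosenDef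
  have hChosen : #Chosen ≤ θ := by
    refine (mk_iUnion_le _).trans ?_
    exact (mul_le_mul' (hW.le.trans hρθ) (ciSup_le' fun x => hChosenAt _ (hiter x))).trans
      (mul_eq_self hθ).le
  have hξ : ∃ ξ : A, ξ ∉ Chosen := by
    by_contra hcon
    push_neg at hcon
    have : (Set.univ : Set A) ⊆ Chosen := fun ξ _ => hcon ξ
    have := (mk_le_mk_of_subset this).trans hChosen
    rw [mk_univ] at this
    exact absurd this (not_le.2 hA)
  obtain ⟨ξstar, hξstar⟩ := hξ
  set T : Set I := psupp (F ξstar) ∩ Btot with hT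
  have hTcard : #T ≤ lam := (mk_le_mk_of_subset inter_subset_left).trans (hsupp ξstar)
  have hxi : ∀ i : T, ∃ x : W, (i : I) ∈ step (iterCl W step x) := by
    intro i
    have := i.2.2
    rw [hBtot] at this
    exact mem_iUnion.1 this
  choose xi hxi using hxi
  -- find an upper bound in W
  let e := Ordinal.ToType.mk (o := ρ.ord)
  let f : T → Ordinal.{u} := fun i => Order.succ (e.symm (xi i)).1
  have hf : ∀ i, f i < ρ.ord := fun i =>
    (Cardinal.isSuccLimit_ord hρreg.aleph0_le).succ_lt (e.symm (xi i)).2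
  have hcard : #T < (ρ.ord).cof := by
    rw [hρreg.cof_eq]
    exact hTcard.trans_lt hlamρ
  have hsup : (⨆ i, f i) < ρ.ord := Ordinal.iSup_lt_ord hcard hf
  set xstar : W := e ⟨_, hsup⟩ with hxstar
  have hxlt : ∀ i : T, xi i < xstar := by
    intro i
    have h1 : e.symm (xi i) < (⟨_, hsup⟩ : Iio ρ.ord) := by
      rw [← Subtype.coe_lt_coe]
      exact lt_of_lt_of_le (Order.lt_succ _) (le_ciSup (Ordinal.bddAbove_range f) i)
    calc xi i = e (e.symm (xi i)) := (e.apply_symm_apply _).symm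
      _ < e ⟨_, hsup⟩ := e.strictMono h1
  have hTsub : ∀ i : T, (i : I) ∈ iterCl W step xstar := by
    intro i
    rw [iterCl_eq]
    exact mem_iUnion.2 ⟨⟨xi i, hxlt i⟩, hxi i⟩
  -- the punchline
  set Bs : Set I := iterCl W step xstar with hBs
  have hex : ∃ ξ, restr Bs (F ξ) = restr Bs (F ξstar) := ⟨ξstar, rfl⟩
  have hsel : sel Bs (restr Bs (F ξstar)) = some hex.choose := dif_pos hex
  set ξ₀ := hex.choose with hξ₀
  have hres : restr Bs (F ξ₀) = restr Bs (F ξstar) := hex.choose_spec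
  have hmem : ξ₀ ∈ ChosenAt Bs := ⟨_, hsel⟩
  have hne : ξ₀ ≠ ξstar := by
    intro h
    rw [h] at hmem
    exact hξstar (mem_iUnion.2 ⟨xstar, hmem⟩)
  obtain ⟨i, h1, h2, h3⟩ := hinc ξ₀ ξstar hne
  have hiT : i ∈ T := by
    refine ⟨h2, ?_⟩
    have hstepmem : i ∈ step Bs := Or.inr (mem_biUnion hmem h1)
    exact mem_iUnion.2 ⟨xstar, hstepmem⟩
  have hiB : i ∈ Bs := hTsub ⟨i, hiT⟩
  exact h3 (by rw [← restr_apply_of_mem (f := F ξ₀) hiB, hres, restr_apply_of_mem hiB])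

lemma exists_box (κ : Cardinal.{u}) (hκ : ℵ₀ ≤ κ) {ι : Type u} (X : ι → Type u)
    [∀ i, TopologicalSpace (X i)] {O : Set (∀ i, X i)}
    (hO : @IsOpen _ (boxTopology κ X) O) :
    ∀ x ∈ O, ∃ U : ∀ i, Set (X i), (∀ i, IsOpen (U i)) ∧ #{i | U i ≠ Set.univ} < κ ∧
      x ∈ Set.pi Set.univ U ∧ Set.pi Set.univ U ⊆ O := by
  have hO' : TopologicalSpace.GenerateOpen
      {S | ∃ U : ∀ i, Set (X i), (∀ i, IsOpen (U i)) ∧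
        #{i | U i ≠ Set.univ} < κ ∧ S = Set.pi Set.univ U} O := hO
  clear hO
  induction hO' with
  | basic S hS =>
    rintro x hx
    obtain ⟨U, h1, h2, rfl⟩ := hS
    exact ⟨U, h1, h2, hx, subset_rfl⟩
  | univ =>
    intro x _
    refine ⟨fun _ => Set.univ, fun _ => isOpen_univ, ?_, fun i _ => mem_univ _,
      subset_univ _⟩
    have : {i : ι | (Set.univ : Set (X i)) ≠ Set.univ} = ∅ := by simp
    rw [this, mk_emptyCollection]
    exact lt_of_lt_of_le aleph0_pos hκ
  | inter S T hS hT ihS ihT =>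
    intro x hx
    obtain ⟨U, hU1, hU2, hU3, hU4⟩ := ihS x hx.1
    obtain ⟨U', hV1, hV2, hV3, hV4⟩ := ihT x hx.2
    refine ⟨fun i => U i ∩ U' i, fun i => (hU1 i).inter (hV1 i), ?_,
      fun i _ => ⟨hU3 i trivial, hV3 i trivial⟩, ?_⟩
    · have hsub : {i | U i ∩ U' i ≠ Set.univ} ⊆
          {i | U i ≠ Set.univ} ∪ {i | U' i ≠ Set.univ} := by
        intro i hi
        by_contra hcon
        simp only [mem_union, mem_setOf_eq, not_or, not_not] at hcon
        exact hi (by rw [hcon.1, hcon.2, univ_inter])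
      calc #{i | U i ∩ U' i ≠ Set.univ}
          ≤ #({i | U i ≠ Set.univ} ∪ {i | U' i ≠ Set.univ} : Set ι) :=
            mk_le_mk_of_subset hsub
        _ ≤ #{i | U i ≠ Set.univ} + #{i | U' i ≠ Set.univ} := mk_union_le _ _
        _ < κ := add_lt_of_lt hκ hU2 hV2
    · intro y hy
      exact ⟨hU4 fun i _ => (hy i trivial).1, hV4 fun i _ => (hy i trivial).2⟩
  | sUnion 𝒮 hS ih =>
    intro x hx
    obtain ⟨S, hSmem, hxS⟩ := hx
    obtain ⟨U, h1, h2, h3, h4⟩ := ih S hSmem x hxS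
    exact ⟨U, h1, h2, h3, h4.trans (subset_sUnion_of_mem hSmem)⟩

end Stmt15Aux

set_option maxHeartbeats 2000000 in
theorem stmt15 (α κ : Cardinal.{u}) (hα : 2 ≤ α) (hκ : ℵ₀ ≤ κ)
    {ι : Type u} (X : ι → Type u) [∀ i, TopologicalSpace (X i)]
    (hd : ∀ i, dens (X i) ≤ α) :
    @souslin (∀ i, X i) (boxTopology κ X) ≤ Order.succ (α ^< κ) := by
  classical
  have hκμ : κ ≤ α ^< κ := Stmt15Aux.kappa_le_powerlt α κ hα hκ
  unfold souslin
  refine csInf_le' ?_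
  rintro ⟨C, ⟨hCopen, hCdisj⟩, hCcard⟩
  -- dense sets of size at most α
  have hdense : ∀ i, ∃ D : Set (X i), Dense D ∧ #D ≤ α := by
    intro i
    have hne : {c | ∃ D : Set (X i), Dense D ∧ #D = c}.Nonempty :=
      ⟨#(Set.univ : Set (X i)), Set.univ, dense_univ, rfl⟩
    obtain ⟨D, hD, hDc⟩ := csInf_mem hne
    exact ⟨D, hD, le_trans (le_of_eq hDc) (hd i)⟩
  choose D hDdense hDcard using hdense
  set A := ↥C with hA
  have hAcard : Order.succ (α ^< κ) ≤ #A := le_of_eq hCcard.symm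
  -- choose a nonempty basic box inside each member of the cellular family
  have hbox : ∀ ξ : A, ∃ U : ∀ i, Set (X i), (∀ i, IsOpen (U i)) ∧
      #{i | U i ≠ Set.univ} < κ ∧
      (Set.pi Set.univ U).Nonempty ∧ Set.pi Set.univ U ⊆ ξ.1 := by
    intro ξ
    obtain ⟨hopen, x, hx⟩ := hCopen ξ.1 ξ.2
    obtain ⟨U, h1, h2, h3, h4⟩ := Stmt15Aux.exists_box κ hκ X hopen x hx
    exact ⟨U, h1, h2, ⟨x, h3⟩, h4⟩
  choose U hUopen hUcard hUne hUsub using hbox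
  -- choose points of the boxes with coordinates in the dense sets
  have hpoint : ∀ (ξ : A) i, ∃ y, y ∈ U ξ i ∧ y ∈ D i := by
    intro ξ i
    obtain ⟨x, hx⟩ := hUne ξ
    obtain ⟨y, hy1, hy2⟩ := (hDdense i).inter_open_nonempty _ (hUopen ξ i) ⟨x i, hx i trivial⟩
    exact ⟨y, hy1, hy2⟩
  choose p hpU hpD using hpoint
  set S : A → Set ι := fun ξ => {i | U ξ i ≠ Set.univ} with hS
  -- pairwise explicit incompatibility
  have hkey : ∀ ξ η : A, ξ ≠ η → ∃ i, i ∈ S ξ ∧ i ∈ S η ∧ p ξ i ≠ p η i := by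
    intro ξ η hne
    by_contra hcon
    push_neg at hcon
    have hdisj : Disjoint ξ.1 η.1 := hCdisj ξ.2 η.2 (fun h => hne (Subtype.ext h))
    set x : ∀ i, X i := fun i => if i ∈ S ξ then p ξ i else p η i with hx
    have hx1 : x ∈ Set.pi Set.univ (U ξ) := by
      intro i _
      by_cases h : i ∈ S ξ
      · simpa [hx, if_pos h] using hpU ξ i
      · have huniv : U ξ i = Set.univ := not_not.1 h
        rw [huniv]
        trivial
    have hx2 : x ∈ Set.pi Set.univ (U η) := by
      intro i _
      by_cases h' : i ∈ S η
      · by_cases h : i ∈ S ξ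
        · have : x i = p ξ i := by simp [hx, if_pos h]
          rw [this, hcon i h h']
          exact hpU η i
        · have : x i = p η i := by simp [hx, if_neg h]
          rw [this]
          exact hpU η i
      · have huniv : U η i = Set.univ := not_not.1 h'
        rw [huniv]
        trivial
    exact (Set.disjoint_left.1 hdisj) (hUsub ξ hx1) (hUsub η hx2)
  -- fix the size of the supports by a pigeonhole argument
  obtain ⟨lam, hlamκ, hfib⟩ := Stmt15Aux.pigeonhole κ (α ^< κ) hκ hκμ hAcard
    (fun ξ => #(S ξ)) (fun ξ => hUcard ξ)
  obtain ⟨θ, hθ1, hθ2, hθ3, hθ4, hθ5⟩ := Stmt15Aux.theta_spec α lam κ hα hκ hlamκ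
  set A' := {ξ : A // #(S ξ) = lam} with hA'
  -- code the data as partial functions with values in `α.out`
  have hemb : ∀ i, ∃ e : ↥(D i) → α.out, Function.Injective e := by
    intro i
    obtain ⟨e⟩ := Cardinal.le_def _ _ |>.1 ((hDcard i).trans_eq (mk_out α).symm)
    exact ⟨e, e.injective⟩
  choose emb hembinj using hemb
  set F : A' → ι → Option α.out := fun ξ i =>
    if h : i ∈ S ξ.1 then some (emb i ⟨p ξ.1 i, hpD ξ.1 i⟩) else none with hF
  have hFsupp : ∀ ξ : A', Stmt15Aux.psupp (F ξ) = S ξ.1 := by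
    intro ξ
    ext i
    by_cases h : i ∈ S ξ.1 <;> simp [Stmt15Aux.psupp, hF, h]
  have h1 : ∀ ξ : A', #(Stmt15Aux.psupp (F ξ)) ≤ lam := by
    intro ξ
    rw [hFsupp]
    exact le_of_eq ξ.2
  have h2 : ∀ ξ η : A', ξ ≠ η → ∃ i, F ξ i ≠ none ∧ F η i ≠ none ∧ F ξ i ≠ F η i := by
    intro ξ η hne
    obtain ⟨i, hi1, hi2, hi3⟩ := hkey ξ.1 η.1 (fun h => hne (Subtype.ext h))
    refine ⟨i, ?_, ?_, ?_⟩
    · have hm : i ∈ Stmt15Aux.psupp (F ξ) := by rw [hFsupp]; exact hi1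
      exact hm
    · have hm : i ∈ Stmt15Aux.psupp (F η) := by rw [hFsupp]; exact hi2
      exact hm
    · simp only [hF, dif_pos hi1, dif_pos hi2, ne_eq, Option.some_inj]
      intro h
      exact hi3 (congrArg Subtype.val (hembinj i h))
  have hVcard : #α.out ≤ θ := by
    rw [mk_out]
    exact hθ2
  have hcore := Stmt15Aux.core (I := ι) (V := α.out) (A := A') lam θ hθ1 hθ3 hθ4 hVcard F h1 h2
  have hA'big : Order.succ (α ^< κ) ≤ #A' := hfib
  have hfinal : Order.succ (α ^< κ) ≤ α ^< κ := (hA'big.trans hcore).trans hθ5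
  exact absurd (Order.succ_le_iff.1 hfinal) (lt_irrefl _)
end

section
/- Let α ≥ 3 and κ ≥ ω be cardinals, and let {X_i : i ∈ I} be a set of topological spaces such that |I|⁺ ≥ κ and α ≤ S(X_i) for each i ∈ I. Then: (a) α^{<κ} ≤ S((X_I)_κ); and (b) if in addition α < κ, then 2^{<κ} = α^{<κ} and (α^{<κ})⁺ ≤ S((X_I)_κ). -/
open Cardinal TopologicalSpace Set

universe u

/-! ### Basic facts about `souslin` -/

lemma souslin_bound_set_nonempty (X : Type u) [TopologicalSpace X] :
    {c | ¬∃ C : Set (Set X), IsCellular C ∧ #C = c}.Nonempty := by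
  refine ⟨Order.succ #(Set X), ?_⟩
  rintro ⟨C, -, hC⟩
  exact absurd (hC ▸ mk_set_le C) (not_le.2 (Order.lt_succ #(Set X)))

lemma exists_cellular_of_lt_souslin {X : Type u} [TopologicalSpace X] {c : Cardinal.{u}}
    (h : c < souslin X) : ∃ C : Set (Set X), IsCellular C ∧ #C = c := by
  by_contra hc
  have hle := csInf_le (OrderBot.bddBelow
    {c | ¬∃ C : Set (Set X), IsCellular C ∧ #C = c}) hc
  exact absurd (hle : souslin X ≤ c) (not_le.2 h)

lemma le_souslin {X : Type u} [TopologicalSpace X] {a : Cardinal.{u}}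
    (h : ∀ c < a, ∃ C : Set (Set X), IsCellular C ∧ #C = c) : a ≤ souslin X := by
  refine le_csInf (souslin_bound_set_nonempty X) (fun c hc => ?_)
  by_contra hlt
  exact hc (h c (not_le.1 hlt))

lemma cellular_subfamily {X : Type u} [TopologicalSpace X] {C : Set (Set X)}
    (h : IsCellular C) {c : Cardinal.{u}} (hc : c ≤ #C) :
    ∃ C' : Set (Set X), IsCellular C' ∧ #C' = c := by
  obtain ⟨D, hD, hDc⟩ := le_mk_iff_exists_subset.1 hc
  exact ⟨D, ⟨fun U hU => h.1 U (hD hU), h.2.mono hD⟩, hDc⟩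

lemma space_nonempty_of_souslin {X : Type u} [TopologicalSpace X]
    (h : 3 ≤ souslin X) : Nonempty X := by
  obtain ⟨C, hC, hC1⟩ := exists_cellular_of_lt_souslin
    (lt_of_lt_of_le (by norm_num : (1 : Cardinal.{u}) < 3) h)
  obtain ⟨⟨U, hU⟩⟩ := Cardinal.mk_ne_zero_iff.1 (by rw [hC1]; norm_num)
  obtain ⟨x, -⟩ := (hC.1 U hU).2
  exact ⟨x⟩

lemma exists_disjoint_pair_of_souslin {X : Type u} [TopologicalSpace X]
    (h : 3 ≤ souslin X) : ∃ P Q : Set X,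
      IsOpen P ∧ IsOpen Q ∧ P.Nonempty ∧ Q.Nonempty ∧ Disjoint P Q := by
  obtain ⟨C, hC, hC2⟩ := exists_cellular_of_lt_souslin
    (lt_of_lt_of_le (by norm_num : (2 : Cardinal.{u}) < 3) h)
  have : Nontrivial C := Cardinal.one_lt_iff_nontrivial.1 (by rw [hC2]; norm_num)
  obtain ⟨⟨U, hU⟩, ⟨V, hV⟩, hUV⟩ := this.exists_pair_ne
  have hUV' : U ≠ V := fun hh => hUV (Subtype.ext hh)
  exact ⟨U, V, (hC.1 U hU).1, (hC.1 V hV).1, (hC.1 U hU).2, (hC.1 V hV).2,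
    hC.2 hU hV hUV'⟩

/-! ### Cylinders over an embedding -/

variable {κ : Cardinal.{u}} {ι : Type u} {X : ι → Type u} [∀ i, TopologicalSpace (X i)]

/-- The full profile of open sets determined by a partial profile `V` on the coordinates in the
range of `e` (and `univ` elsewhere). -/
def cyl {T : Type u} (e : T ↪ ι) (V : ∀ t, Set (X (e t))) : ∀ i, Set (X i) :=
  fun i => ⋂ (t : T) (h : e t = i), cast (congrArg X h.symm) ⁻¹' V t

lemma cyl_apply_eq {T : Type u} (e : T ↪ ι) (V : ∀ t, Set (X (e t))) (t : T) :
    cyl e V (e t) = V t := by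
  apply subset_antisymm
  · intro x hx
    simp only [cyl, mem_iInter] at hx
    have := hx t rfl
    simpa using this
  · intro x hx
    simp only [cyl, mem_iInter]
    intro t' h
    have ht' : t' = t := e.injective h
    subst ht'
    have hcast : cast (congrArg X h.symm) x = x := cast_eq_iff_heq.mpr HEq.rfl
    simpa [hcast] using hx

lemma cyl_apply_of_not_mem {T : Type u} (e : T ↪ ι) (V : ∀ t, Set (X (e t))) {i : ι}
    (hi : i ∉ range e) : cyl e V i = Set.univ := by
  apply eq_univ_iff_forall.2
  intro x
  simp only [cyl, mem_iInter]
  intro t h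
  exact absurd ⟨t, h⟩ hi

lemma box_isOpen {U : ∀ i, Set (X i)} (hU : ∀ i, IsOpen (U i))
    (hs : #{i | U i ≠ Set.univ} < κ) :
    @IsOpen _ (boxTopology κ X) (pi univ U) :=
  TopologicalSpace.GenerateOpen.basic _ ⟨U, hU, hs, rfl⟩

/-- The master construction: a family of "partial boxes" with pairwise disjointness witnessed
coordinatewise gives a cellular family in the `κ`-box product. -/
lemma exists_cellular_box (hne : ∀ i, Nonempty (X i)) {T D : Type u} (e : T ↪ ι)
    (W : D → ∀ t, Set (X (e t)))
    (hop : ∀ d t, IsOpen (W d t)) (hwne : ∀ d t, (W d t).Nonempty)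
    (hsupp : ∀ d, #{t | W d t ≠ Set.univ} < κ)
    (hdisj : ∀ d d', d ≠ d' → ∃ t, Disjoint (W d t) (W d' t)) :
    ∃ C : Set (Set (∀ i, X i)), @IsCellular _ (boxTopology κ X) C ∧ #C = #D := by
  classical
  set B : D → Set (∀ i, X i) := fun d => pi univ (cyl e (W d)) with hB
  have hBopen : ∀ d, @IsOpen _ (boxTopology κ X) (B d) := by
    intro d
    apply box_isOpen
    · intro i
      by_cases hi : i ∈ range e
      · obtain ⟨t, rfl⟩ := hi
        rw [cyl_apply_eq]
        exact hop d t
      · rw [cyl_apply_of_not_mem e _ hi]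
        exact isOpen_univ
    · refine lt_of_le_of_lt (mk_le_mk_of_subset (t := e '' {t | W d t ≠ Set.univ}) ?_)
        (lt_of_le_of_lt mk_image_le (hsupp d))
      intro i hi
      by_cases hir : i ∈ range e
      · obtain ⟨t, rfl⟩ := hir
        refine ⟨t, ?_, rfl⟩
        rw [mem_setOf_eq, ← cyl_apply_eq e (W d) t]
        exact hi
      · exact absurd (cyl_apply_of_not_mem e _ hir) hi
  have hBne : ∀ d, (B d).Nonempty := by
    intro d
    rw [hB]
    apply univ_pi_nonempty_iff.2
    intro i
    by_cases hi : i ∈ range e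
    · obtain ⟨t, rfl⟩ := hi
      rw [cyl_apply_eq]
      exact hwne d t
    · rw [cyl_apply_of_not_mem e _ hi]
      exact univ_nonempty
  have hBdisj : ∀ d d', d ≠ d' → Disjoint (B d) (B d') := by
    intro d d' hdd
    obtain ⟨t, ht⟩ := hdisj d d' hdd
    rw [Set.disjoint_left]
    intro x hx hx'
    have h1 : x (e t) ∈ cyl e (W d) (e t) := hx (e t) (mem_univ _)
    have h2 : x (e t) ∈ cyl e (W d') (e t) := hx' (e t) (mem_univ _)
    rw [cyl_apply_eq] at h1 h2
    exact Set.disjoint_left.1 ht h1 h2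
  have hBinj : Function.Injective B := by
    intro d d' hdd
    by_contra hne'
    have := hBdisj d d' hne'
    rw [hdd] at this
    exact (hBne d').ne_empty (disjoint_self.1 this)
  refine ⟨range B, ⟨?_, ?_⟩, mk_range_eq B hBinj⟩
  · rintro U ⟨d, rfl⟩
    exact ⟨hBopen d, hBne d⟩
  · rintro U ⟨d, rfl⟩ V ⟨d', rfl⟩ hUV
    exact hBdisj d d' (fun h => hUV (congrArg B h))

/-- Construction I: products of coordinatewise cellular families. -/
lemma exists_cellular_box_prod {α : Cardinal.{u}} (hα : 3 ≤ α)
    (hS : ∀ i, α ≤ souslin (X i)) (T : Type u) (hT : #T ≤ #ι)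
    (g : T → Cardinal.{u}) (hgκ : #T < κ) (hg : ∀ t, g t < α) :
    ∃ C : Set (Set (∀ i, X i)), @IsCellular _ (boxTopology κ X) C ∧ #C = prod g := by
  classical
  obtain ⟨e⟩ : Nonempty (T ↪ ι) := Cardinal.le_def T ι |>.1 hT
  have hne : ∀ i, Nonempty (X i) := fun i => space_nonempty_of_souslin (hα.trans (hS i))
  have hfam : ∀ t : T, ∃ f : Quotient.out (g t) → Set (X (e t)),
      Function.Injective f ∧ (∀ a, IsOpen (f a) ∧ (f a).Nonempty) ∧
      (∀ a b, a ≠ b → Disjoint (f a) (f b)) := by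
    intro t
    obtain ⟨C, hC, hCc⟩ := exists_cellular_of_lt_souslin ((hg t).trans_le (hS (e t)))
    obtain ⟨q⟩ : Nonempty (Quotient.out (g t) ≃ C) := Cardinal.eq.1 (by rw [mk_out, hCc])
    refine ⟨fun a => (q a : Set (X (e t))), ?_, ?_, ?_⟩
    · exact fun a b hab => q.injective (Subtype.ext hab)
    · exact fun a => hC.1 _ (q a).2
    · exact fun a b hab => hC.2 (q a).2 (q b).2
        (fun hh => hab (q.injective (Subtype.ext hh)))
  choose f hf1 hf2 hf3 using hfam
  obtain ⟨C, hC, hCc⟩ := exists_cellular_box (κ := κ) hne e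
    (fun (d : ∀ t, Quotient.out (g t)) t => f t (d t))
    (fun d t => (hf2 t (d t)).1) (fun d t => (hf2 t (d t)).2)
    (fun d => lt_of_le_of_lt (mk_subtype_le _) hgκ)
    (fun d d' hdd => by
      obtain ⟨t, ht⟩ := Function.ne_iff.1 hdd
      exact ⟨t, hf3 t _ _ ht⟩)
  refine ⟨C, hC, hCc.trans ?_⟩
  simp only [mk_pi, mk_out]

/-- Construction II: when `κ` is a limit cardinal with `κ ≤ #ι`, there is a cellular family of
size at least `2 ^< κ`. -/
lemma exists_cellular_box_limit {α : Cardinal.{u}} (hα : 3 ≤ α) (hκ : ℵ₀ ≤ κ)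
    (hS : ∀ i, α ≤ souslin (X i)) (hκι : κ ≤ #ι) :
    ∃ C : Set (Set (∀ i, X i)), @IsCellular _ (boxTopology κ X) C ∧ 2 ^< κ ≤ #C := by
  classical
  have hne : ∀ i, Nonempty (X i) := fun i => space_nonempty_of_souslin (hα.trans (hS i))
  have hpair := fun i => exists_disjoint_pair_of_souslin (hα.trans (hS i))
  choose P Q hPo hQo hPn hQn hPQ using hpair
  have hmkK : #κ.ord.ToType = κ := mk_ord_toType κ
  obtain ⟨e⟩ : Nonempty ((κ.ord.ToType ⊕ κ.ord.ToType) ↪ ι) := by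
    refine Cardinal.le_def _ _ |>.1 ?_
    calc #(κ.ord.ToType ⊕ κ.ord.ToType) = #κ.ord.ToType + #κ.ord.ToType := by simp [mk_sum]
    _ = κ := by rw [hmkK, add_eq_self hκ]
    _ ≤ #ι := hκι
  set D := Σ j : κ.ord.ToType, (Iio j → ULift.{u} Bool) with hD
  set W : D → ∀ t : κ.ord.ToType ⊕ κ.ord.ToType, Set (X (e t)) := fun d t =>
    match t with
    | Sum.inl k =>
        if k < d.1 then P (e (Sum.inl k)) else if k = d.1 then Q (e (Sum.inl k)) else univ
    | Sum.inr k =>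
        if h : k < d.1 then (if (d.2 ⟨k, h⟩).down then Q (e (Sum.inr k)) else P (e (Sum.inr k)))
        else if k = d.1 then Q (e (Sum.inr k)) else univ
    with hW
  have hop : ∀ d t, IsOpen (W d t) := by
    rintro d (k | k) <;> simp only [hW] <;> split_ifs <;>
      first | exact hPo _ | exact hQo _ | exact isOpen_univ
  have hwne : ∀ d t, (W d t).Nonempty := by
    rintro d (k | k) <;> simp only [hW] <;> split_ifs <;>
      first | exact hPn _ | exact hQn _ | exact univ_nonempty
  have hsupp : ∀ d, #{t | W d t ≠ Set.univ} < κ := by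
    intro d
    have hsub : {t | W d t ≠ Set.univ} ⊆ (Sum.inl '' Iic d.1) ∪ (Sum.inr '' Iic d.1) := by
      rintro (k | k) hk
      · left
        refine ⟨k, ?_, rfl⟩
        by_contra hkj
        have h1 : ¬ k < d.1 := fun hh => hkj (le_of_lt hh)
        have h2 : ¬ k = d.1 := fun hh => hkj (le_of_eq hh)
        exact hk (by simp only [hW, if_neg h1, if_neg h2])
      · right
        refine ⟨k, ?_, rfl⟩
        by_contra hkj
        have h1 : ¬ k < d.1 := fun hh => hkj (le_of_lt hh)
        have h2 : ¬ k = d.1 := fun hh => hkj (le_of_eq hh)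
        exact hk (by simp only [hW, dif_neg h1, if_neg h2])
    have hIic : #(Iic d.1) < κ := by
      rw [← Set.Iio_insert]
      refine lt_of_le_of_lt mk_insert_le ?_
      exact add_lt_of_lt hκ (mk_Iio_ord_toType d.1) (one_lt_aleph0.trans_le hκ)
    calc #{t | W d t ≠ Set.univ} ≤ #((Sum.inl '' Iic d.1) ∪ (Sum.inr '' Iic d.1) : Set (κ.ord.ToType ⊕ κ.ord.ToType)) :=
          mk_le_mk_of_subset hsub
    _ ≤ #(Sum.inl '' Iic d.1) + #(Sum.inr '' Iic d.1) := mk_union_le _ _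
    _ < κ := add_lt_of_lt hκ (lt_of_le_of_lt mk_image_le hIic)
          (lt_of_le_of_lt mk_image_le hIic)
  have hdisj : ∀ d d', d ≠ d' → ∃ t, Disjoint (W d t) (W d' t) := by
    rintro ⟨j, F⟩ ⟨j', F'⟩ hdd
    rcases lt_trichotomy j j' with hjj | hjj | hjj
    · refine ⟨Sum.inl j, ?_⟩
      have h1 : ¬ j < j := lt_irrefl j
      simp only [hW, if_neg h1, if_pos rfl, if_pos hjj]
      exact (hPQ _).symm
    · subst hjj
      have hFF : F ≠ F' := by
        intro hh
        exact hdd (by rw [hh])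
      obtain ⟨p, hp⟩ := Function.ne_iff.1 hFF
      refine ⟨Sum.inr p.1, ?_⟩
      have hp1 : p.1 < j := p.2
      have hcoe : (⟨p.1, hp1⟩ : Iio j) = p := Subtype.ext rfl
      simp only [hW, dif_pos hp1, hcoe]
      rcases Bool.eq_false_or_eq_true (F p).down with h1 | h1 <;>
        rcases Bool.eq_false_or_eq_true (F' p).down with h2 | h2
      · exact absurd (ULift.ext _ _ (h1.trans h2.symm)) hp
      · rw [if_pos h1, if_neg (by rw [h2]; exact Bool.false_ne_true)]
        exact hPQ _ |>.symm
      · rw [if_neg (by rw [h1]; exact Bool.false_ne_true), if_pos h2]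
        exact hPQ _
      · exact absurd (ULift.ext _ _ (h1.trans h2.symm)) hp
    · refine ⟨Sum.inl j', ?_⟩
      have h1 : ¬ j' < j' := lt_irrefl j'
      simp only [hW, if_pos hjj, if_neg h1, if_pos rfl]
      exact hPQ _
  obtain ⟨C, hC, hCc⟩ := exists_cellular_box (κ := κ) hne e W hop hwne hsupp hdisj
  refine ⟨C, hC, ?_⟩
  rw [hCc]
  refine powerlt_le.2 (fun lam hlam => ?_)
  letI : IsWellOrder κ.ord.ToType (· < ·) := isWellOrder_lt
  obtain ⟨j, hj⟩ : ∃ j : κ.ord.ToType, Ordinal.typein ((· < ·) : κ.ord.ToType → κ.ord.ToType → Prop) j = lam.ord := by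
    have h1 : lam.ord < Ordinal.type ((· < ·) : κ.ord.ToType → κ.ord.ToType → Prop) := by
      rw [Ordinal.type_toType]; exact Cardinal.ord_lt_ord.2 hlam
    obtain ⟨j, hj⟩ := Ordinal.typein_surj ((· < ·) : κ.ord.ToType → κ.ord.ToType → Prop) h1
    exact ⟨j, hj⟩
  have hIio : #(Iio j) = lam := by
    have := Ordinal.card_typein (r := ((· < ·) : κ.ord.ToType → κ.ord.ToType → Prop)) j
    rw [hj, Cardinal.card_ord] at this
    exact (Cardinal.mk_congr (Equiv.subtypeEquivRight
      (p := fun y => y ∈ Iio j) (q := fun y => y < j) (fun y => Iff.rfl))).trans this.symm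
  have hcomp : (2 : Cardinal.{u}) ^ lam = #(Iio j → ULift.{u} Bool) := by
    rw [← Cardinal.power_def (ULift.{u} Bool) (Iio j), hIio]
    congr 1
    simp
  rw [hcomp, hD]
  have := Cardinal.le_sum (fun j : κ.ord.ToType => #(Iio j → ULift.{u} Bool)) j
  rwa [← mk_sigma] at this

/-! ### The cardinal-arithmetic lemma -/

lemma power_le_of_finite_exp {α lam : Cardinal.{u}} (hαω : ℵ₀ ≤ α) (hlam : lam < ℵ₀) :
    α ^ lam ≤ α := by
  obtain ⟨n, rfl⟩ := Cardinal.lt_aleph0.1 hlam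
  clear hlam
  induction n with
  | zero => simpa using (one_le_aleph0.trans hαω)
  | succ n ih =>
    have : ((n + 1 : ℕ) : Cardinal) = (n : Cardinal) + 1 := by push_cast; ring
    rw [this, power_add, power_one]
    calc α ^ (n : Cardinal) * α ≤ α * α := mul_le_mul_left ih α
    _ = α := mul_eq_self hαω

lemma arith_main {α c lam κ : Cardinal.{u}} (hα : 3 ≤ α) (hκ : ℵ₀ ≤ κ)
    (hlam : lam < κ) (hc : c < α ^ lam) :
    ∃ (T : Type u) (g : T → Cardinal.{u}), #T < κ ∧ (∀ t, g t < α) ∧ c ≤ prod g := by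
  classical
  have h2α : (2 : Cardinal.{u}) < α := lt_of_lt_of_le (by norm_num) hα
  by_cases hαω : ℵ₀ ≤ α
  · by_cases hcα : c < α
    · refine ⟨PUnit, fun _ => c ⊔ 2, ?_, fun _ => max_lt hcα h2α, ?_⟩
      · rw [mk_punit]
        exact one_lt_aleph0.trans_le hκ
      · rw [prod_const', mk_punit, power_one]
        exact le_max_left c 2
    · have hαc : α ≤ c := not_lt.1 hcα
      have hlamω : ℵ₀ ≤ lam := by
        by_contra h
        exact absurd hc (not_lt.2 ((power_le_of_finite_exp hαω (not_le.1 h)).trans hαc))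
      set A := α.ord.ToType with hA
      have hmkA : #A = α := mk_ord_toType α
      set L := lam.out with hL
      have hmkL : #L = lam := mk_out lam
      have hIic : ∀ a : A, #(Iic a) < α := by
        intro a
        rw [← Set.Iio_insert]
        exact lt_of_le_of_lt mk_insert_le
          (add_lt_of_lt hαω (mk_Iio_ord_toType a) (one_lt_aleph0.trans_le hαω))
      by_cases hP : ∃ g : L → Cardinal.{u}, (∀ m, g m < α) ∧ c ≤ prod g
      · obtain ⟨g, hg, hcg⟩ := hP
        exact ⟨L, g, hmkL ▸ hlam, hg, hcg⟩
      · exfalso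
        have hprod : ∀ g : L → Cardinal.{u}, (∀ m, g m < α) → prod g ≤ c := by
          intro g hg
          by_contra hh
          exact hP ⟨g, hg, (not_le.1 hh).le⟩
        have hcω : ℵ₀ ≤ c := hαω.trans hαc
        have h2lam : (2 : Cardinal.{u}) ^ lam ≤ c := by
          have := hprod (fun _ => 2) (fun _ => h2α)
          rwa [prod_const', hmkL] at this
        have key : α ^ lam ≤ c := by
          rw [← hmkA, ← hmkL, power_def]
          by_cases hub : ∃ f₀ : L → A, ∀ a : A, ∃ m, a ≤ f₀ m
          · obtain ⟨f₀, hf₀⟩ := hub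
            have hstep : #(L → A) ≤ #(Σ τ : L → L, ∀ m : L, (Iic (f₀ (τ m)) : Set A)) := by
              apply mk_le_of_injective
                (f := fun f => (⟨fun m => (hf₀ (f m)).choose,
                  fun m => ⟨f m, (hf₀ (f m)).choose_spec⟩⟩ :
                  Σ τ : L → L, ∀ m : L, (Iic (f₀ (τ m)) : Set A)))
              exact Function.LeftInverse.injective
                (g := fun p => fun m => ((p.2 m : (Iic (f₀ (p.1 m)) : Set A)) : A))
                (fun f => rfl)
            have hsum : #(Σ τ : L → L, ∀ m : L, (Iic (f₀ (τ m)) : Set A)) ≤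
                (lam ^ lam) * c := by
              rw [mk_sigma]
              calc (Cardinal.sum fun τ : L → L => #(∀ m : L, (Iic (f₀ (τ m)) : Set A)))
                  ≤ Cardinal.sum fun _ : L → L => c := by
                    apply sum_le_sum
                    intro τ
                    rw [mk_pi]
                    exact hprod _ (fun m => hIic (f₀ (τ m)))
              _ = #(L → L) * c := sum_const' _ c
              _ = (lam ^ lam) * c := by rw [← power_def, hmkL]
            have hll : lam ^ lam ≤ c := by
              calc lam ^ lam ≤ ((2 : Cardinal.{u}) ^ lam) ^ lam :=
                    power_le_power_right (cantor lam).le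
              _ = (2 : Cardinal.{u}) ^ (lam * lam) := (power_mul).symm
              _ = (2 : Cardinal.{u}) ^ lam := by rw [mul_eq_self hlamω]
              _ ≤ c := h2lam
            calc #(L → A) ≤ (lam ^ lam) * c := hstep.trans hsum
            _ ≤ c * c := mul_le_mul_left hll c
            _ = c := mul_eq_self hcω
          · push_neg at hub
            have hstep : #(L → A) ≤ #(Σ a : A, (L → (Iio a : Set A))) := by
              apply mk_le_of_injective
                (f := fun f => (⟨(hub f).choose,
                  fun m => ⟨f m, (hub f).choose_spec m⟩⟩ :
                  Σ a : A, (L → (Iio a : Set A))))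
              exact Function.LeftInverse.injective
                (g := fun p => fun m => ((p.2 m : (Iio p.1 : Set A)) : A))
                (fun f => rfl)
            have hsum : #(Σ a : A, (L → (Iio a : Set A))) ≤ α * c := by
              rw [mk_sigma]
              calc (Cardinal.sum fun a : A => #(L → (Iio a : Set A)))
                  ≤ Cardinal.sum fun _ : A => c := by
                    apply sum_le_sum
                    intro a
                    have := hprod (fun _ : L => #(Iio a : Set A))
                      (fun _ => mk_Iio_ord_toType a)
                    rw [prod_const', hmkL] at this
                    rw [← power_def, hmkL]
                    exact this
              _ = #A * c := sum_const' _ c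
              _ = α * c := by rw [hmkA]
            calc #(L → A) ≤ α * c := hstep.trans hsum
            _ ≤ c * c := mul_le_mul_left hαc c
            _ = c := mul_eq_self hcω
        exact absurd hc (not_lt.2 key)
  · -- α finite
    by_cases hlamω : ℵ₀ ≤ lam
    · have hle : α ^ lam ≤ (2 : Cardinal.{u}) ^ lam := by
        calc α ^ lam ≤ ((2 : Cardinal.{u}) ^ α) ^ lam := power_le_power_right (cantor α).le
        _ = (2 : Cardinal.{u}) ^ (α * lam) := (power_mul).symm
        _ ≤ (2 : Cardinal.{u}) ^ lam := by
            apply power_le_power_left two_ne_zero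
            calc α * lam ≤ lam * lam :=
              mul_le_mul_left ((not_le.1 hαω).le.trans hlamω) lam
            _ = lam := mul_eq_self hlamω
      refine ⟨Quotient.out lam, fun _ => 2, ?_, fun _ => h2α, ?_⟩
      · rw [mk_out]; exact hlam
      · rw [prod_const', mk_out]
        exact (hc.trans_le hle).le
    · have hcfin : c < ℵ₀ :=
        hc.trans (power_lt_aleph0 (not_le.1 hαω) (not_le.1 hlamω))
      obtain ⟨n, rfl⟩ := Cardinal.lt_aleph0.1 hcfin
      refine ⟨ULift.{u} (Fin (2 ^ n)), fun _ => 2, ?_, fun _ => h2α, ?_⟩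
      · simp only [mk_uLift, mk_fin]
        exact lt_of_lt_of_le (by simpa using nat_lt_aleph0 (2 ^ n)) hκ
      · rw [prod_const']
        simp only [mk_uLift, mk_fin, Cardinal.lift_natCast]
        calc ((n : Cardinal.{u})) ≤ ((2 ^ n : ℕ) : Cardinal.{u}) :=
              Nat.cast_le.2 (Nat.lt_two_pow_self).le
        _ = (2 : Cardinal.{u}) ^ (n : Cardinal.{u}) := by
              simp
        _ ≤ (2 : Cardinal.{u}) ^ ((2 ^ n : ℕ) : Cardinal.{u}) := by
              apply power_le_power_left two_ne_zero
              exact Nat.cast_le.2 (Nat.lt_two_pow_self).le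
    
theorem stmt16 (α κ : Cardinal.{u}) (hα : 3 ≤ α) (hκ : ℵ₀ ≤ κ)
    {ι : Type u} (X : ι → Type u) [∀ i, TopologicalSpace (X i)]
    (hI : κ ≤ Order.succ #ι) (hS : ∀ i, α ≤ souslin (X i)) :
    α ^< κ ≤ @souslin (∀ i, X i) (boxTopology κ X) ∧
    (α < κ → (2 : Cardinal.{u}) ^< κ = α ^< κ ∧
      Order.succ (α ^< κ) ≤ @souslin (∀ i, X i) (boxTopology κ X)) := by
  classical
  letI := boxTopology κ X
  have hexists : ∀ c : Cardinal.{u}, c < α ^< κ →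
      ∃ C : Set (Set (∀ i, X i)), IsCellular C ∧ #C = c := by
    intro c hc
    obtain ⟨lam, hlam, hclam⟩ : ∃ lam < κ, c < α ^ lam := by
      by_contra h
      push_neg at h
      exact hc.not_ge (powerlt_le.2 h)
    obtain ⟨T, g, hTκ, hg, hcg⟩ := arith_main hα hκ hlam hclam
    have hTι : #T ≤ #ι := Order.lt_succ_iff.1 (hTκ.trans_le hI)
    obtain ⟨C, hC, hCc⟩ := exists_cellular_box_prod hα hS T hTι g hTκ hg
    exact cellular_subfamily hC (hcg.trans_eq hCc.symm)
  constructor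
  · exact le_souslin hexists
  · intro hακ
    have h2α : (2 : Cardinal.{u}) ^< κ = α ^< κ := by
      apply le_antisymm
      · refine powerlt_le.2 (fun x hx => ?_)
        exact (power_le_power_right (le_trans (by norm_num) hα : (2 : Cardinal.{u}) ≤ α)).trans
          (le_powerlt α hx)
      · refine powerlt_le.2 (fun lam hlam => ?_)
        calc α ^ lam ≤ ((2 : Cardinal.{u}) ^ α) ^ lam := power_le_power_right (cantor α).le
        _ = (2 : Cardinal.{u}) ^ (α * lam) := (power_mul).symm
        _ ≤ (2 : Cardinal.{u}) ^< κ := le_powerlt 2 (mul_lt_of_lt hκ hακ hlam)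
    refine ⟨h2α, ?_⟩
    have hbig : ∃ C : Set (Set (∀ i, X i)), IsCellular C ∧ α ^< κ ≤ #C := by
      by_cases hsucc : ∃ ν : Cardinal.{u}, κ = Order.succ ν
      · obtain ⟨ν, rfl⟩ := hsucc
        have hνι : ν ≤ #ι := Order.lt_succ_iff.1 ((Order.lt_succ ν).trans_le hI)
        obtain ⟨C, hC, hCc⟩ := exists_cellular_box_prod hα hS (Quotient.out ν)
          (by rw [mk_out]; exact hνι) (fun _ => 2)
          (by rw [mk_out]; exact Order.lt_succ ν) (fun _ => lt_of_lt_of_le (by norm_num) hα)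
        refine ⟨C, hC, ?_⟩
        rw [hCc, prod_const', mk_out, ← h2α, powerlt_succ two_ne_zero]
      · have hκι : κ ≤ #ι := by
          rcases lt_or_eq_of_le hI with h | h
          · exact Order.lt_succ_iff.1 h
          · exact absurd ⟨#ι, h⟩ hsucc
        obtain ⟨C, hC, hCc⟩ := exists_cellular_box_limit hα hκ hS hκι
        exact ⟨C, hC, h2α ▸ hCc⟩
    obtain ⟨C, hC, hCs⟩ := hbig
    refine le_souslin (fun c hc => ?_)
    exact cellular_subfamily hC ((Order.lt_succ_iff.1 hc).trans hCs)
end
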